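/- arXiv:1210.6670 — 7 statements merged into one kernel-verified Lean document; each statement's English description precedes it below -/
import Mathlib

section
/- Let E₀ be a Banach space and E₀ ⊇ E₁ ⊇ E₂ ⊇ ⋯ a nested sequence of linear subspaces, each E_k equipped with a complete norm ‖·‖_k (with ‖·‖₀ the given norm of E₀), such that for all j < k the inclusion (E_k,‖·‖_k) → (E_j,‖·‖_j) is bounded and compact. Set E_∞ := ⋂_k E_k (not assumed dense in the levels) and let Ê_k denote the closure of E_∞ in (E_k,‖·‖_k). Then: (a) Ê_k ⊆ Ê_j for all j < k, and the inclusion (Ê_k,‖·‖_k) → (Ê_j,‖·‖_j) is bounded and compact; (b) E_∞ is dense in each (Ê_k,‖·‖_k); (c) ⋂_k Ê_k = E_∞. In particular (Ê_k)_{k∈ℕ₀} with the norms ‖·‖_k is an sc-Banach space. -/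
/-!
Statement 5: repairing a non-dense scale by taking closures of the smooth points
yields an sc-Banach space.
-/

open Bornology Topology Filter

universe u

/-- The composite inclusion operator from level `j + d` down to level `j` of a scale of
Banach spaces with one-step inclusions `ι`. -/
def scInclDown (E : ℕ → Type u) [∀ k, NormedAddCommGroup (E k)] [∀ k, NormedSpace ℝ (E k)]
    (ι : ∀ k, E (k + 1) →ₗ[ℝ] E k) (j : ℕ) : (d : ℕ) → E (j + d) →ₗ[ℝ] E j
  | 0 => LinearMap.id
  | d + 1 => (scInclDown E ι j d).comp (ι (j + d))

/-- The set of "smooth points" (i.e. points of `E_∞`) of the level `E j`. -/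
def scSmoothSet (E : ℕ → Type u) [∀ k, NormedAddCommGroup (E k)] [∀ k, NormedSpace ℝ (E k)]
    (ι : ∀ k, E (k + 1) →ₗ[ℝ] E k) (j : ℕ) : Set (E j) :=
  {x | ∀ d : ℕ, ∃ y : E (j + d), scInclDown E ι j d y = x}

/-- `Ê_j`: the closure of the set of smooth points in the level `E j`. -/
def scHatSet (E : ℕ → Type u) [∀ k, NormedAddCommGroup (E k)] [∀ k, NormedSpace ℝ (E k)]
    (ι : ∀ k, E (k + 1) →ₗ[ℝ] E k) (j : ℕ) : Set (E j) :=
  closure (scSmoothSet E ι j)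

section Aux

variable (E : ℕ → Type u) [∀ k, NormedAddCommGroup (E k)] [∀ k, NormedSpace ℝ (E k)]
    (ι : ∀ k, E (k + 1) →ₗ[ℝ] E k)

lemma sc_ι_cast (m n : ℕ) (h : m = n) (w : E (m + 1)) :
    ι n (cast (congrArg E (congrArg (· + 1) h)) w) = cast (congrArg E h) (ι m w) := by
  subst h; rfl

lemma sc_incl_cast (j m n : ℕ) (h : m = n) (w : E (j + m)) :
    scInclDown E ι j n (cast (congrArg E (congrArg (j + ·) h)) w) =
      scInclDown E ι j m w := by
  subst h; rfl

lemma sc_incl_comp (j d : ℕ) : ∀ (e : ℕ) (w : E (j + (d + e))),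
    scInclDown E ι j d (scInclDown E ι (j + d) e
      (cast (congrArg E (Nat.add_assoc j d e).symm) w)) = scInclDown E ι j (d + e) w
  | 0, w => rfl
  | e + 1, w => by
    have h1 : ι (j + d + e) (cast (congrArg E (congrArg (· + 1) (Nat.add_assoc j d e).symm)) w)
        = cast (congrArg E (Nat.add_assoc j d e).symm) (ι (j + (d + e)) w) :=
      sc_ι_cast E ι _ _ (Nat.add_assoc j d e).symm w
    have h2 := sc_incl_comp j d e (ι (j + (d + e)) w)
    show scInclDown E ι j d (scInclDown E ι (j + d) e (ι (j + d + e) _)) = _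
    rw [show (cast (congrArg E (Nat.add_assoc j d (e+1)).symm) w :)
        = cast (congrArg E (congrArg (· + 1) (Nat.add_assoc j d e).symm)) w from rfl, h1]
    exact h2

lemma sc_incl_cont (hbounded : ∀ k, Continuous (ι k)) (j : ℕ) :
    ∀ d : ℕ, Continuous (scInclDown E ι j d)
  | 0 => continuous_id
  | d + 1 => by
    show Continuous fun x => scInclDown E ι j d (ι (j + d) x)
    exact (sc_incl_cont hbounded j d).comp (hbounded (j + d))

lemma sc_incl_inj (hinj : ∀ k, Function.Injective (ι k)) (j : ℕ) :
    ∀ d : ℕ, Function.Injective (scInclDown E ι j d)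
  | 0 => fun a b h => h
  | d + 1 => by
    show Function.Injective fun x => scInclDown E ι j d (ι (j + d) x)
    exact (sc_incl_inj hinj j d).comp (hinj (j + d))

lemma sc_smooth_maps (j d : ℕ) {x : E (j + d)} (hx : x ∈ scSmoothSet E ι (j + d)) :
    scInclDown E ι j d x ∈ scSmoothSet E ι j := by
  intro e
  obtain ⟨y, hy⟩ := hx e
  set w' : E (j + (d + e)) := cast (congrArg E (Nat.add_assoc j d e)) y with hw'
  have h0 : cast (congrArg E (Nat.add_assoc j d e).symm) w' = y := by
    rw [hw', cast_cast]
    exact cast_eq_iff_heq.mpr HEq.rfl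
  have h1 : scInclDown E ι j (d + e) w' = scInclDown E ι j d x := by
    rw [← sc_incl_comp E ι j d e w', h0, hy]
  set w : E (j + (e + d)) := cast (congrArg E (congrArg (j + ·) (Nat.add_comm d e))) w' with hw
  have h2 : scInclDown E ι j (e + d) w = scInclDown E ι j (d + e) w' :=
    sc_incl_cast E ι j (d + e) (e + d) (Nat.add_comm d e) w'
  refine ⟨scInclDown E ι (j + e) d (cast (congrArg E (Nat.add_assoc j e d).symm) w), ?_⟩
  rw [sc_incl_comp E ι j e d w, h2, h1]

lemma sc_smooth_lift (hinj : ∀ k, Function.Injective (ι k)) (j d : ℕ) {x : E j}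
    (hx : x ∈ scSmoothSet E ι j) :
    ∃ y ∈ scSmoothSet E ι (j + d), scInclDown E ι j d y = x := by
  obtain ⟨y, hy⟩ := hx d
  refine ⟨y, ?_, hy⟩
  intro e
  obtain ⟨w, hw⟩ := hx (d + e)
  refine ⟨cast (congrArg E (Nat.add_assoc j d e).symm) w, ?_⟩
  apply sc_incl_inj E ι hinj j d
  rw [sc_incl_comp E ι j d e w, hw, hy]

end Aux

/-- the closure lemma of Section 2.1 of the paper.
Given a nested scale of Banach spaces with injective, bounded and compact inclusions
(density of `E_∞` *not* assumed, in fact assumed to fail), the closures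
`Ê_k := cl_{E_k}(E_∞)` satisfy:
(a) the inclusions map `Ê_{j+d}` into `Ê_j`, boundedly and compactly;
(b) `E_∞` is dense in each `Ê_k`;
(c) the set of points of level `0` admitting lifts to every `Ê_k` is exactly `E_∞`;
and moreover (the "in particular (Ê_k) is an sc-Banach space" part)
(d) every point of `Ê_{j+d}` has a neighborhood mapping to a relatively compact subset
of `Ê_j`, and (e) each `Ê_j` is a complete subset. -/
theorem stmt5 (E : ℕ → Type u) [∀ k, NormedAddCommGroup (E k)] [∀ k, NormedSpace ℝ (E k)]
    (ι : ∀ k, E (k + 1) →ₗ[ℝ] E k)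
    (hinj : ∀ k, Function.Injective (ι k))
    (hcomplete : ∀ k, CompleteSpace (E k))
    (hbounded : ∀ k, Continuous (ι k))
    (hcompact : ∀ j d : ℕ, 0 < d → ∀ S : Set (E (j + d)), IsBounded S →
      IsCompact (closure (scInclDown E ι j d '' S)))
    (hnotdense : ¬ ∀ j, Dense (scSmoothSet E ι j)) :
    (∀ j d : ℕ, 0 < d →
      Set.MapsTo (scInclDown E ι j d) (scHatSet E ι (j + d)) (scHatSet E ι j) ∧
      (∃ C : ℝ, ∀ x ∈ scHatSet E ι (j + d), ‖scInclDown E ι j d x‖ ≤ C * ‖x‖) ∧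
      (∀ S : Set (E (j + d)), S ⊆ scHatSet E ι (j + d) → IsBounded S →
        IsCompact (closure (scInclDown E ι j d '' S)) ∧
        closure (scInclDown E ι j d '' S) ⊆ scHatSet E ι j)) ∧
    (∀ j, ∀ x ∈ scHatSet E ι j, ∀ ε > (0:ℝ), ∃ y ∈ scSmoothSet E ι j, ‖x - y‖ < ε) ∧
    (∀ j, {x : E j | x ∈ scHatSet E ι j ∧
        ∀ d : ℕ, ∃ y ∈ scHatSet E ι (j + d), scInclDown E ι j d y = x} = scSmoothSet E ι j) ∧
    (∀ j d : ℕ, 0 < d → ∀ p ∈ scHatSet E ι (j + d), ∃ O ∈ 𝓝 p,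
      IsCompact (closure (scInclDown E ι j d '' (O ∩ scHatSet E ι (j + d)))) ∧
      closure (scInclDown E ι j d '' (O ∩ scHatSet E ι (j + d))) ⊆ scHatSet E ι j) ∧
    (∀ j, IsComplete (scHatSet E ι j)) := by
  have hmapsTo : ∀ j d : ℕ,
      Set.MapsTo (scInclDown E ι j d) (scHatSet E ι (j + d)) (scHatSet E ι j) := by
    intro j d
    exact (Set.MapsTo.closure (fun x hx => sc_smooth_maps E ι j d hx)
      (sc_incl_cont E ι hbounded j d))
  have hsubset : ∀ j d : ℕ, ∀ S : Set (E (j + d)), S ⊆ scHatSet E ι (j + d) →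
      closure (scInclDown E ι j d '' S) ⊆ scHatSet E ι j := by
    intro j d S hS
    refine closure_minimal ?_ isClosed_closure
    rintro _ ⟨x, hxS, rfl⟩
    exact hmapsTo j d (hS hxS)
  refine ⟨?_, ?_, ?_, ?_, ?_⟩
  · intro j d hd
    refine ⟨hmapsTo j d, ?_, ?_⟩
    · haveI := hcomplete j
      haveI := hcomplete (j + d)
      let L : E (j + d) →L[ℝ] E j := ⟨scInclDown E ι j d, sc_incl_cont E ι hbounded j d⟩
      exact ⟨‖L‖, fun x _ => L.le_opNorm x⟩
    · intro S hS hSb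
      exact ⟨hcompact j d hd S hSb, hsubset j d S hS⟩
  · intro j x hx ε hε
    obtain ⟨y, hy, hdy⟩ := Metric.mem_closure_iff.mp hx ε hε
    exact ⟨y, hy, by rwa [← dist_eq_norm]⟩
  · intro j
    ext x
    constructor
    · rintro ⟨hx, h⟩ d
      obtain ⟨y, -, hy⟩ := h d
      exact ⟨y, hy⟩
    · intro hx
      refine ⟨subset_closure hx, fun d => ?_⟩
      obtain ⟨y, hys, hy⟩ := sc_smooth_lift E ι hinj j d hx
      exact ⟨y, subset_closure hys, hy⟩
  · intro j d hd p hp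
    refine ⟨Metric.ball p 1, Metric.ball_mem_nhds p one_pos, ?_, ?_⟩
    · exact hcompact j d hd _ (Metric.isBounded_ball.subset Set.inter_subset_left)
    · exact hsubset j d _ Set.inter_subset_right
  · intro j
    haveI := hcomplete j
    exact isClosed_closure.isComplete
end

section
/- Let 𝔼 = (E_k)_{k∈ℕ₀} be an sc-Banach space. (a) If E₀ is finite-dimensional, then E_k = E₀ as sets for every k and all the norms ‖·‖_k are pairwise equivalent; in particular the only sc-structure on a finite-dimensional space is the trivial one. (b) Conversely, if E₁ = E₀ as sets, then E₀ is finite-dimensional. -/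
/-!
Statement 6: the only sc-structure on a finite-dimensional space is the trivial one;
conversely if two consecutive levels agree the space is finite dimensional.
-/

open Bornology Topology Filter

universe u

/-- `(E_k)` together with the inclusions `ι` is an sc-Banach space. -/
def IsScBanach (E : ℕ → Type u) [∀ k, NormedAddCommGroup (E k)] [∀ k, NormedSpace ℝ (E k)]
    (ι : ∀ k, E (k + 1) →ₗ[ℝ] E k) : Prop :=
  (∀ k, Function.Injective (ι k)) ∧
  (∀ k, Continuous (ι k)) ∧
  (∀ k, CompleteSpace (E k)) ∧
  (∀ j d : ℕ, 0 < d → ∀ p : E (j + d),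
    ∃ O ∈ 𝓝 p, IsCompact (closure (scInclDown E ι j d '' O))) ∧
  (∀ j, Dense (scSmoothSet E ι j))

/-- (a) If the bottom level `E 0` of an sc-Banach space is finite dimensional, then all the
inclusions `E k → E 0` are onto (so all levels agree as sets) and all the norms are
equivalent (it suffices to compare each level with level `0`).
(b) Conversely, if the one-step inclusion `E 1 → E 0` is onto, then `E 0` is finite
dimensional. -/
theorem stmt6 (E : ℕ → Type u) [∀ k, NormedAddCommGroup (E k)] [∀ k, NormedSpace ℝ (E k)]
    (ι : ∀ k, E (k + 1) →ₗ[ℝ] E k) (hsc : IsScBanach E ι) :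
    (FiniteDimensional ℝ (E 0) →
      ∀ k : ℕ, Function.Surjective (scInclDown E ι 0 k) ∧
        ∃ c C : ℝ, 0 < c ∧ ∀ x : E (0 + k),
          c * ‖x‖ ≤ ‖scInclDown E ι 0 k x‖ ∧ ‖scInclDown E ι 0 k x‖ ≤ C * ‖x‖) ∧
    (Function.Surjective (ι 0) → FiniteDimensional ℝ (E 0)) := by
  obtain ⟨hinj, hcont, hcompl, hcpt, hdense⟩ := hsc
  constructor
  · -- (a)
    intro hfd
    -- main induction: surjectivity and finite-dimensionality of all levels
    have key : ∀ k : ℕ, Function.Surjective (scInclDown E ι 0 k) ∧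
        FiniteDimensional ℝ (E (0 + k)) := by
      intro k
      induction k with
      | zero => exact ⟨fun x => ⟨x, rfl⟩, hfd⟩
      | succ k ih =>
        haveI : FiniteDimensional ℝ (E (0 + k)) := ih.2
        have hsur : Function.Surjective (ι (0 + k)) := by
          have hcl : IsClosed ((LinearMap.range (ι (0 + k)) : Submodule ℝ (E (0 + k))) :
              Set (E (0 + k))) :=
            Submodule.closed_of_finiteDimensional _
          have hsub : scSmoothSet E ι (0 + k) ⊆
              ((LinearMap.range (ι (0 + k)) : Submodule ℝ (E (0 + k))) : Set (E (0 + k))) := by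
            intro x hx
            obtain ⟨y, hy⟩ := hx 1
            exact ⟨y, hy⟩
          have hd : Dense ((LinearMap.range (ι (0 + k)) : Submodule ℝ (E (0 + k))) :
              Set (E (0 + k))) := (hdense (0 + k)).mono hsub
          intro x
          have hx : x ∈ ((LinearMap.range (ι (0 + k)) : Submodule ℝ (E (0 + k))) :
              Set (E (0 + k))) := by
            have := hd.closure_eq
            rw [hcl.closure_eq] at this
            rw [this]; trivial
          exact hx
        refine ⟨?_, FiniteDimensional.of_injective (ι (0 + k)) (hinj (0 + k))⟩
        exact ih.1.comp hsur
    intro k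
    refine ⟨(key k).1, ?_⟩
    haveI : FiniteDimensional ℝ (E (0 + k)) := (key k).2
    -- injectivity of the composite inclusion
    have hinjk : ∀ m : ℕ, Function.Injective (scInclDown E ι 0 m) := by
      intro m
      induction m with
      | zero => exact fun a b h => h
      | succ m ihm => exact fun a b h => hinj (0 + m) (ihm h)
    let e : E (0 + k) ≃ₗ[ℝ] E 0 :=
      LinearEquiv.ofBijective (scInclDown E ι 0 k) ⟨hinjk k, (key k).1⟩
    let e' : E (0 + k) ≃L[ℝ] E 0 := e.toContinuousLinearEquiv
    set N : ℝ := ‖(e'.symm : E 0 →L[ℝ] E (0 + k))‖ with hN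
    have hNpos : (0 : ℝ) < N + 1 := by positivity
    refine ⟨(N + 1)⁻¹, ‖(e' : E (0 + k) →L[ℝ] E 0)‖, by positivity, fun x => ?_⟩
    have hex : scInclDown E ι 0 k x = e' x := rfl
    constructor
    · rw [hex]
      have h1 : ‖x‖ = ‖e'.symm (e' x)‖ := by rw [e'.symm_apply_apply]
      have h2 : ‖e'.symm (e' x)‖ ≤ N * ‖e' x‖ :=
        (e'.symm : E 0 →L[ℝ] E (0 + k)).le_opNorm (e' x)
      have h3 : ‖x‖ ≤ (N + 1) * ‖e' x‖ := by
        nlinarith [norm_nonneg (e' x)]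
      rw [inv_mul_le_iff₀ hNpos]
      linarith
    · rw [hex]
      exact (e' : E (0 + k) →L[ℝ] E 0).le_opNorm x
  · -- (b)
    intro hsurj
    haveI : CompleteSpace (E 0) := hcompl 0
    haveI : CompleteSpace (E 1) := hcompl 1
    let f : E 1 →L[ℝ] E 0 := ⟨ι 0, hcont 0⟩
    let e : E 1 ≃L[ℝ] E 0 :=
      ContinuousLinearEquiv.ofBijective f
        (LinearMap.ker_eq_bot.2 (hinj 0)) (LinearMap.range_eq_top.2 hsurj)
    obtain ⟨O, hO, hc⟩ := hcpt 0 1 one_pos (0 : E (0 + 1))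
    have himg : scInclDown E ι 0 1 '' O = e '' O := rfl
    have hnb : e '' O ∈ 𝓝 (e (0 : E 1)) := e.toHomeomorph.isOpenMap.image_mem_nhds hO
    have hnb' : closure (e '' O) ∈ 𝓝 (e (0 : E 1)) :=
      mem_of_superset hnb subset_closure
    rw [himg] at hc
    haveI : LocallyCompactSpace (E 0) :=
      hc.locallyCompactSpace_of_mem_nhds_of_addGroup hnb'
    exact FiniteDimensional.of_locallyCompactSpace ℝ
end

section
/- Chain Rule for scale calculus: Let 𝔼, 𝔽, 𝔾 be sc-Banach spaces, and let f : 𝔼 → 𝔽 and g : 𝔽 → 𝔾 be sc¹ maps. Then g ∘ f : 𝔼 → 𝔾 is sc¹, and T(g ∘ f) = Tg ∘ Tf; explicitly, for every x ∈ E₁ one has D_x(g ∘ f) = D_{f(x)}g ∘ D_x f as bounded linear operators E₀ → G₀. -/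
/-!
Statement 13 (Theorem 3.13 of the paper): the chain rule for scale calculus.

An sc-Banach space is encoded as a sequence of Banach spaces `E k` together with
injective bounded linear inclusions `ι k : E (k+1) → E k` whose composites are compact
operators and such that the set of "smooth points" is dense in every level.  A map
between sc-Banach spaces is encoded as a family of maps on the levels commuting with
the inclusions; an sc¹ map comes with differential data `Df` satisfying the
requirements of Definition 3.4 of the paper.
-/

open Bornology Topology Filter

universe u v w

section ScMaps

variable (X : ℕ → Type u) (Y : ℕ → Type v)
  [∀ k, NormedAddCommGroup (X k)] [∀ k, NormedSpace ℝ (X k)]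
  [∀ k, NormedAddCommGroup (Y k)] [∀ k, NormedSpace ℝ (Y k)]
  (ιX : ∀ k, X (k + 1) →ₗ[ℝ] X k) (ιY : ∀ k, Y (k + 1) →ₗ[ℝ] Y k)

/-- A family of maps on the levels is compatible with the inclusions, i.e. defines a
single map `𝔼 → 𝔽` preserving the scale filtration. -/
def ScCompat (f : ∀ k, X k → Y k) : Prop :=
  ∀ (k : ℕ) (x : X (k + 1)), f k (ιX k x) = ιY k (f (k + 1) x)

/-- `f` is sc⁰: it preserves the levels and is continuous on each level. -/
def IsSc0 (f : ∀ k, X k → Y k) : Prop :=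
  (∀ k, Continuous (f k)) ∧ ScCompat X Y ιX ιY f

/-- `Df` is sc¹-differential data for `f` (Definition 3.4 / Remark 3.5 of the paper):
`f` is sc⁰; for every `x ∈ E_{k+1}` the differential `Df k x` is a bounded linear
operator `E_k → F_k`; the differentials fit together to an sc⁰ tangent map
`(x,h) ↦ D_x f (h)` on `(E_{k+1} × E_k)_k`; and at points `x ∈ E₁` the difference
quotient (measured with `‖h‖_{E₁}`) converges. -/
def IsSc1Data (f : ∀ k, X k → Y k) (Df : ∀ k, X (k + 1) → X k → Y k) : Prop :=
  IsSc0 X Y ιX ιY f ∧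
  (∀ (k : ℕ) (x : X (k + 1)), IsBoundedLinearMap ℝ (Df k x)) ∧
  (∀ k : ℕ, Continuous fun p : X (k + 1) × X k => Df k p.1 p.2) ∧
  (∀ (k : ℕ) (x : X (k + 2)) (h : X (k + 1)),
    Df k (ιX (k + 1) x) (ιX k h) = ιY k (Df (k + 1) x h)) ∧
  (∀ x : X 1, ∀ ε > (0 : ℝ), ∃ δ > (0 : ℝ), ∀ h : X 1, ‖h‖ ≤ δ →
    ‖f 0 (ιX 0 (x + h)) - f 0 (ιX 0 x) - Df 0 x (ιX 0 h)‖ ≤ ε * ‖h‖)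

end ScMaps

open Set in
/-- Derivative of `t ↦ g(ι(y + t•k))` from the sc¹ difference-quotient estimate. -/
lemma aux_sc_deriv {E : Type u} {F : Type v} {G : Type w}
    [NormedAddCommGroup E] [NormedSpace ℝ E]
    [NormedAddCommGroup F] [NormedSpace ℝ F]
    [NormedAddCommGroup G] [NormedSpace ℝ G]
    (ι : E →ₗ[ℝ] F) (g : F → G) (D : E → F → G)
    (hlin : ∀ p : E, IsBoundedLinearMap ℝ (D p))
    (hest : ∀ p : E, ∀ ε > (0 : ℝ), ∃ δ > (0 : ℝ), ∀ u : E, ‖u‖ ≤ δ →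
      ‖g (ι (p + u)) - g (ι p) - D p (ι u)‖ ≤ ε * ‖u‖)
    (y k : E) (t : ℝ) :
    HasDerivAt (fun s : ℝ => g (ι (y + s • k))) (D (y + t • k) (ι k)) t := by
  rcases eq_or_ne k 0 with rfl | hk
  · have h1 : (fun s : ℝ => g (ι (y + s • (0 : E)))) = fun _ => g (ι y) := by
      funext s; simp
    have h2 : D (y + t • (0 : E)) (ι 0) = 0 := by
      simp [(hlin _).toIsLinearMap.map_zero]
    rw [h1, h2]
    exact hasDerivAt_const t _
  · have hknorm : (0 : ℝ) < ‖k‖ := norm_pos_iff.2 hk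
    rw [hasDerivAt_iff_isLittleO, Asymptotics.isLittleO_iff]
    intro c hc
    obtain ⟨δ, hδ, hδ'⟩ := hest (y + t • k) (c / ‖k‖) (div_pos hc hknorm)
    have hev : ∀ᶠ s : ℝ in 𝓝 t, |s - t| ≤ δ / ‖k‖ := by
      have : Metric.closedBall t (δ / ‖k‖) ∈ 𝓝 t :=
        Metric.closedBall_mem_nhds t (div_pos hδ hknorm)
      filter_upwards [this] with s hs
      simpa [Real.dist_eq] using hs
    filter_upwards [hev] with s hs
    have hu : ‖(s - t) • k‖ ≤ δ := by
      rw [norm_smul, Real.norm_eq_abs]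
      calc |s - t| * ‖k‖ ≤ (δ / ‖k‖) * ‖k‖ := by
            exact mul_le_mul_of_nonneg_right hs (norm_nonneg k)
        _ = δ := div_mul_cancel₀ δ (ne_of_gt hknorm)
    have := hδ' ((s - t) • k) hu
    have e1 : y + t • k + (s - t) • k = y + s • k := by
      rw [add_assoc, ← add_smul]; ring_nf
    have e2 : D (y + t • k) (ι ((s - t) • k)) = (s - t) • D (y + t • k) (ι k) := by
      rw [map_smul]; exact (hlin _).toIsLinearMap.map_smul _ _
    rw [e1, e2] at this
    calc ‖g (ι (y + s • k)) - g (ι (y + t • k)) - (s - t) • D (y + t • k) (ι k)‖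
        ≤ (c / ‖k‖) * ‖(s - t) • k‖ := this
      _ = c * ‖s - t‖ := by
          rw [norm_smul, Real.norm_eq_abs]
          field_simp

/-- **Statement 13** (chain rule): if `f : 𝔼 → 𝔽` and `g : 𝔽 → 𝔾` are sc¹ maps between
sc-Banach spaces, then `g ∘ f` is sc¹ with `T(g ∘ f) = Tg ∘ Tf`; explicitly,
`D_x (g ∘ f) = D_{f(x)} g ∘ D_x f` is sc¹-differential data for `g ∘ f`. -/
theorem stmt13
    (X : ℕ → Type u) (Y : ℕ → Type v) (Z : ℕ → Type w)
    [∀ k, NormedAddCommGroup (X k)] [∀ k, NormedSpace ℝ (X k)]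
    [∀ k, NormedAddCommGroup (Y k)] [∀ k, NormedSpace ℝ (Y k)]
    [∀ k, NormedAddCommGroup (Z k)] [∀ k, NormedSpace ℝ (Z k)]
    (ιX : ∀ k, X (k + 1) →ₗ[ℝ] X k) (ιY : ∀ k, Y (k + 1) →ₗ[ℝ] Y k)
    (ιZ : ∀ k, Z (k + 1) →ₗ[ℝ] Z k)
    (hX : IsScBanach X ιX) (hY : IsScBanach Y ιY) (hZ : IsScBanach Z ιZ)
    (f : ∀ k, X k → Y k) (g : ∀ k, Y k → Z k)
    (Df : ∀ k, X (k + 1) → X k → Y k) (Dg : ∀ k, Y (k + 1) → Y k → Z k)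
    (hf : IsSc1Data X Y ιX ιY f Df) (hg : IsSc1Data Y Z ιY ιZ g Dg) :
    IsSc1Data X Z ιX ιZ (fun k x => g k (f k x))
      (fun k x h => Dg k (f (k + 1) x) (Df k x h)) := by
  obtain ⟨⟨hfc, hfcompat⟩, hfbl, hfT, hfDcompat, hfdiff⟩ := hf
  obtain ⟨⟨hgc, hgcompat⟩, hgbl, hgT, hgDcompat, hgdiff⟩ := hg
  replace hfcompat : ∀ (k : ℕ) (x : X (k + 1)), f k (ιX k x) = ιY k (f (k + 1) x) := hfcompat
  replace hgcompat : ∀ (k : ℕ) (y : Y (k + 1)), g k (ιY k y) = ιZ k (g (k + 1) y) := hgcompat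
  refine ⟨⟨fun k => (hgc k).comp (hfc k), fun k x => by simp only [hfcompat, hgcompat]⟩,
    fun k x => (hgbl k (f (k + 1) x)).comp (hfbl k x),
    fun k => (hgT k).comp (((hfc (k + 1)).comp continuous_fst).prodMk (hfT k)),
    fun k x h => by simp only [hfcompat, hfDcompat, hgDcompat],
    ?_⟩
  -- The difference-quotient estimate for the composite.
  show ∀ x : X 1, ∀ ε > (0 : ℝ), ∃ δ > (0 : ℝ), ∀ h : X 1, ‖h‖ ≤ δ →
      ‖g 0 (f 0 (ιX 0 (x + h))) - g 0 (f 0 (ιX 0 x)) - Dg 0 (f 1 x) (Df 0 x (ιX 0 h))‖ ≤ ε * ‖h‖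
  intro x ε hε
  set y : Y 1 := f 1 x with hy
  -- level-0 specializations (indices `0 + 1` vs `1` are definitionally equal)
  have hfco : ∀ x' : X 1, f 0 (ιX 0 x') = ιY 0 (f 1 x') := fun x' => hfcompat 0 x'
  have hgbl0 : ∀ p : Y 1, IsBoundedLinearMap ℝ (Dg 0 p) := fun p => hgbl 0 p
  have hfbl0 : IsBoundedLinearMap ℝ (Df 0 x) := hfbl 0 x
  have hgT0 : Continuous fun q : Y 1 × Y 0 => Dg 0 q.1 q.2 := hgT 0
  -- Step A: a local operator-norm bound for `Dg 0` near `y`.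
  obtain ⟨r, hr, η₀, hη₀, hA⟩ :
      ∃ r > (0 : ℝ), ∃ η₀ > (0 : ℝ), ∀ p : Y 1, ‖p - y‖ ≤ η₀ → ∀ w : Y 0, ‖w‖ ≤ r →
        ‖Dg 0 p w‖ ≤ 1 := by
    have hc : ContinuousAt (fun q : Y 1 × Y 0 => Dg 0 q.1 q.2) (y, 0) := hgT0.continuousAt
    rw [Metric.continuousAt_iff] at hc
    obtain ⟨δ, hδ, hδ'⟩ := hc 1 one_pos
    refine ⟨δ / 2, by positivity, δ / 2, by positivity, fun p hp w hw => ?_⟩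
    have hd : dist (p, w) ((y, (0 : Y 0))) < δ := by
      rw [Prod.dist_eq]
      simp only [dist_eq_norm, sub_zero]
      exact lt_of_le_of_lt (max_le hp hw) (by linarith)
    have h2 := hδ' hd
    rw [dist_eq_norm] at h2
    have h0 : Dg 0 y (0 : Y 0) = 0 := (hgbl0 y).toIsLinearMap.map_zero
    simp only [h0, sub_zero] at h2
    exact h2.le
  set M : ℝ := 1 / r with hMdef
  have hMpos : 0 < M := by positivity
  have hM : ∀ p : Y 1, ‖p - y‖ ≤ η₀ → ∀ w : Y 0, ‖Dg 0 p w‖ ≤ M * ‖w‖ := by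
    intro p hp w
    rcases eq_or_ne w 0 with rfl | hw
    · simp [(hgbl0 p).toIsLinearMap.map_zero]
    · have hwn : (0 : ℝ) < ‖w‖ := norm_pos_iff.2 hw
      have h1 : ‖(r / ‖w‖) • w‖ ≤ r := by
        rw [norm_smul, Real.norm_eq_abs, abs_of_pos (div_pos hr hwn),
          div_mul_cancel₀ _ (ne_of_gt hwn)]
      have h2 := hA p hp _ h1
      rw [(hgbl0 p).toIsLinearMap.map_smul, norm_smul, Real.norm_eq_abs,
        abs_of_pos (div_pos hr hwn), div_mul_eq_mul_div, div_le_one hwn] at h2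
      rw [hMdef, one_div, inv_mul_eq_div, le_div_iff₀ hr]
      calc ‖Dg 0 p w‖ * r = r * ‖Dg 0 p w‖ := mul_comm _ _
        _ ≤ ‖w‖ := h2
  -- Step B: a compact set containing the (rescaled) directions `Df 0 x (ιX 0 h)`.
  obtain ⟨O, hO, hOc⟩ := hX.2.2.2.1 0 1 Nat.one_pos (0 : X (0 + 1))
  obtain ⟨ρ, hρ, hρO⟩ := Metric.nhds_basis_closedBall.mem_iff.1 hO
  have hscl : ∀ w : X (0 + 1), scInclDown X ιX 0 1 w = ιX 0 w := fun w => rfl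
  set K₀ : Set (X 0) := closure (scInclDown X ιX 0 1 '' Metric.closedBall 0 ρ) with hK₀
  have hK₀c : IsCompact K₀ :=
    hOc.of_isClosed_subset isClosed_closure (closure_mono (Set.image_mono hρO))
  set K : Set (Y 0) := Df 0 x '' K₀ with hKdef
  have hKc : IsCompact K := hK₀c.image hfbl0.continuous
  -- Step C: uniform closeness of `Dg 0 p` to `Dg 0 y` on `K`, for `p` near `y`.
  have hKe : ∀ᶠ p : Y 1 in 𝓝 y, ∀ w ∈ K, ‖Dg 0 p w - Dg 0 y w‖ ≤ ρ * (ε / 2) := by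
    apply hKc.eventually_forall_of_forall_eventually
    intro w _
    have hT : Tendsto (fun z : Y 1 × Y 0 => ‖Dg 0 z.1 z.2 - Dg 0 y z.2‖)
        (𝓝 (y, w)) (𝓝 0) := by
      have hcont : Continuous fun z : Y 1 × Y 0 => ‖Dg 0 z.1 z.2 - Dg 0 y z.2‖ := by
        apply Continuous.norm
        exact hgT0.sub (hgT0.comp (continuous_const.prodMk continuous_snd))
      have := hcont.tendsto (y, w)
      simpa using this
    have hpos : (0 : ℝ) < ρ * (ε / 2) := by positivity
    exact (hT.eventually_lt_const hpos).mono fun z hz => hz.le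
  obtain ⟨η₂, hη₂, hC⟩ := Metric.eventually_nhds_iff.1 hKe
  -- choose the constants
  set ε₁ : ℝ := ε / (2 * (M + 1)) with hε₁def
  have hε₁ : 0 < ε₁ := by positivity
  obtain ⟨δ₁, hδ₁, hδ₁'⟩ := hfdiff x ε₁ hε₁
  have hf1 : ContinuousAt (f 1) x := (hfc 1).continuousAt
  rw [Metric.continuousAt_iff] at hf1
  have hηpos : (0 : ℝ) < min η₀ (η₂ / 2) := lt_min hη₀ (by linarith)
  obtain ⟨δc, hδc, hδc'⟩ := hf1 _ hηpos
  refine ⟨min (δc / 2) δ₁, lt_min (by linarith) hδ₁, fun h hh => ?_⟩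
  have hhδ₁ : ‖h‖ ≤ δ₁ := le_trans hh (min_le_right _ _)
  rcases eq_or_ne h 0 with rfl | hne
  · simp [hfbl0.toIsLinearMap.map_zero, (hgbl0 y).toIsLinearMap.map_zero]
  have hn : (0 : ℝ) < ‖h‖ := norm_pos_iff.2 hne
  set k : Y 1 := f 1 (x + h) - f 1 x with hkdef
  have hk_small : ‖k‖ ≤ min η₀ (η₂ / 2) := by
    have hd : dist (x + h) x < δc := by
      rw [dist_eq_norm, add_sub_cancel_left]
      exact lt_of_le_of_lt (le_trans hh (min_le_left _ _)) (by linarith)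
    have := hδc' hd
    rw [dist_eq_norm] at this
    exact this.le
  have hιk : (ιY 0) k = f 0 (ιX 0 (x + h)) - f 0 (ιX 0 x) := by
    rw [hkdef, map_sub, ← hfco, ← hfco]
  have hest1 : ‖ιY 0 k - Df 0 x (ιX 0 h)‖ ≤ ε₁ * ‖h‖ := by
    rw [hιk]
    exact hδ₁' h hhδ₁
  set v : Y 0 := Df 0 x (ιX 0 h) with hvdef
  set cc : Z 0 := Dg 0 y v with hccdef
  set φ : ℝ → Z 0 := fun t => g 0 (ιY 0 (y + t • k)) - t • cc with hφdef
  have hφd : ∀ t ∈ Set.Icc (0 : ℝ) 1,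
      HasDerivWithinAt φ (Dg 0 (y + t • k) (ιY 0 k) - cc) (Set.Icc (0 : ℝ) 1) t := by
    intro t _
    have h1 : HasDerivAt (fun s : ℝ => g 0 (ιY 0 (y + s • k))) (Dg 0 (y + t • k) (ιY 0 k)) t :=
      aux_sc_deriv (ιY 0) (g 0) (Dg 0) hgbl0 hgdiff y k t
    have h2 : HasDerivAt (fun s : ℝ => s • cc) cc t := by
      simpa using (hasDerivAt_id t).smul_const cc
    exact (h1.sub h2).hasDerivWithinAt
  have hCb : ∀ t ∈ Set.Ico (0 : ℝ) 1,
      ‖Dg 0 (y + t • k) (ιY 0 k) - cc‖ ≤ (M * ε₁ + ε / 2) * ‖h‖ := by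
    intro t ht
    have htk : ‖(y + t • k) - y‖ ≤ min η₀ (η₂ / 2) := by
      rw [add_sub_cancel_left, norm_smul, Real.norm_eq_abs, abs_of_nonneg ht.1]
      calc t * ‖k‖ ≤ 1 * ‖k‖ :=
            mul_le_mul_of_nonneg_right ht.2.le (norm_nonneg k)
        _ = ‖k‖ := one_mul _
        _ ≤ _ := hk_small
    have hp₀ : ‖(y + t • k) - y‖ ≤ η₀ := le_trans htk (min_le_left _ _)
    have hp₂ : dist (y + t • k) y < η₂ := by
      rw [dist_eq_norm]
      exact lt_of_le_of_lt (le_trans htk (min_le_right _ _)) (by linarith)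
    have hdec : Dg 0 (y + t • k) (ιY 0 k) - cc
        = Dg 0 (y + t • k) (ιY 0 k - v) + (Dg 0 (y + t • k) v - Dg 0 y v) := by
      rw [(hgbl0 (y + t • k)).toIsLinearMap.map_sub, hccdef]
      abel
    -- bound for the first summand
    have hterm1 : ‖Dg 0 (y + t • k) (ιY 0 k - v)‖ ≤ M * (ε₁ * ‖h‖) := by
      calc ‖Dg 0 (y + t • k) (ιY 0 k - v)‖ ≤ M * ‖ιY 0 k - v‖ := hM _ hp₀ _
        _ ≤ M * (ε₁ * ‖h‖) := mul_le_mul_of_nonneg_left hest1 hMpos.le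
    -- bound for the second summand, using the compact set K
    have hw : (ρ / ‖h‖) • h ∈ Metric.closedBall (0 : X 1) ρ := by
      rw [Metric.mem_closedBall, dist_zero_right, norm_smul, Real.norm_eq_abs,
        abs_of_pos (div_pos hρ hn), div_mul_cancel₀ _ (ne_of_gt hn)]
    have hv'K : Df 0 x (ιX 0 ((ρ / ‖h‖) • h)) ∈ K := by
      refine ⟨ιX 0 ((ρ / ‖h‖) • h), subset_closure ⟨(ρ / ‖h‖) • h, hw, hscl _⟩, rfl⟩
    have hvsm : v = (‖h‖ / ρ) • Df 0 x (ιX 0 ((ρ / ‖h‖) • h)) := by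
      rw [map_smul, hfbl0.toIsLinearMap.map_smul, smul_smul,
        div_mul_div_comm, mul_comm ‖h‖ ρ, div_self (by positivity : ρ * ‖h‖ ≠ 0), one_smul,
        hvdef]
    have hterm2 : ‖Dg 0 (y + t • k) v - Dg 0 y v‖ ≤ ε / 2 * ‖h‖ := by
      rw [hvsm, (hgbl0 (y + t • k)).toIsLinearMap.map_smul,
        (hgbl0 y).toIsLinearMap.map_smul, ← smul_sub, norm_smul, Real.norm_eq_abs,
        abs_of_pos (div_pos hn hρ)]
      calc ‖h‖ / ρ * ‖Dg 0 (y + t • k) (Df 0 x (ιX 0 ((ρ / ‖h‖) • h)))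
            - Dg 0 y (Df 0 x (ιX 0 ((ρ / ‖h‖) • h)))‖
          ≤ ‖h‖ / ρ * (ρ * (ε / 2)) := by
            apply mul_le_mul_of_nonneg_left _ (by positivity)
            exact hC hp₂ _ hv'K
        _ = ε / 2 * ‖h‖ := by field_simp
    calc ‖Dg 0 (y + t • k) (ιY 0 k) - cc‖
        ≤ ‖Dg 0 (y + t • k) (ιY 0 k - v)‖ + ‖Dg 0 (y + t • k) v - Dg 0 y v‖ := by
          rw [hdec]; exact norm_add_le _ _
      _ ≤ M * (ε₁ * ‖h‖) + ε / 2 * ‖h‖ := add_le_add hterm1 hterm2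
      _ = (M * ε₁ + ε / 2) * ‖h‖ := by ring
  have hmv := norm_image_sub_le_of_norm_deriv_le_segment_01' hφd hCb
  have hφ10 : φ 1 - φ 0 = g 0 (f 0 (ιX 0 (x + h))) - g 0 (f 0 (ιX 0 x)) - cc := by
    have hyk : y + k = f 1 (x + h) := by rw [hkdef]; abel
    simp only [hφdef, one_smul, zero_smul, sub_zero, add_zero]
    rw [hyk, hfco (x + h), hfco x, ← hy]
    abel
  have hfinal : M * ε₁ + ε / 2 ≤ ε := by
    have h1 : M * ε₁ ≤ ε / 2 := by
      rw [hε₁def, ← mul_div_assoc, div_le_div_iff₀ (by positivity) two_pos]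
      nlinarith [hMpos.le, hε.le]
    linarith
  calc ‖g 0 (f 0 (ιX 0 (x + h))) - g 0 (f 0 (ιX 0 x)) - Dg 0 y v‖
      = ‖φ 1 - φ 0‖ := by rw [hφ10, hccdef]
    _ ≤ (M * ε₁ + ε / 2) * ‖h‖ := hmv
    _ ≤ ε * ‖h‖ := mul_le_mul_of_nonneg_right hfinal (norm_nonneg h)
end

section
/- Let 𝔼 be an sc-Banach space and let r : U → U and r′ : U′ → U′ be sc-smooth retractions defined on open subsets U, U′ ⊆ E₀ with the same image O := r(U) = r′(U′). Then Tr(TU) = Tr′(TU′) as subsets of T𝔼 = E₁ × E₀; equivalently, for every p ∈ O ∩ E₁ the images of the differentials coincide: D_p r(E₀) = D_p r′(E₀) as linear subspaces of E₀. Hence the tangent TO := Tr(TU) of the sc-retract O, with fibers T_pO = D_p r(E₀), is independent of the choice of sc-smooth retraction with image O. -/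
open Bornology Topology Filter

universe u v

/-- Composite inclusion from level `k` all the way down to level `0`. -/
def scDown0 (X : ℕ → Type u) [∀ k, NormedAddCommGroup (X k)] [∀ k, NormedSpace ℝ (X k)]
    (ιX : ∀ k, X (k + 1) →ₗ[ℝ] X k) : (k : ℕ) → X k →ₗ[ℝ] X 0
  | 0 => LinearMap.id
  | k + 1 => (scDown0 X ιX k).comp (ιX k)

section ScMapsOn

variable (X : ℕ → Type u) (Y : ℕ → Type v)
  [∀ k, NormedAddCommGroup (X k)] [∀ k, NormedSpace ℝ (X k)]
  [∀ k, NormedAddCommGroup (Y k)] [∀ k, NormedSpace ℝ (Y k)]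
  (ιX : ∀ k, X (k + 1) →ₗ[ℝ] X k) (ιY : ∀ k, Y (k + 1) →ₗ[ℝ] Y k)

/-- `f` is sc⁰ on the (relatively open) set `U ⊆ X 0`: on every level it preserves the
trace of `U` continuously. -/
def IsSc0On (U : Set (X 0)) (f : ∀ k, X k → Y k) : Prop :=
  (∀ k, ContinuousOn (f k) (scDown0 X ιX k ⁻¹' U)) ∧
  (∀ (k : ℕ) (x : X (k + 1)), scDown0 X ιX (k + 1) x ∈ U →
    f k (ιX k x) = ιY k (f (k + 1) x))

/-- `Df` is sc¹-differential data for `f` on the open set `U ⊆ X 0`: `f` is sc⁰ on `U`;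
at points of `U ∩ E_{k+1}` the differential is a bounded linear map `E_k → F_k`; the
tangent map `(x,h) ↦ D_x f (h)` is sc⁰; and at points of `U ∩ E₁` the difference
quotient (measured with the `E₁`-norm of `h`) converges. -/
def IsSc1DataOn (U : Set (X 0)) (f : ∀ k, X k → Y k)
    (Df : ∀ k, X (k + 1) → X k → Y k) : Prop :=
  IsSc0On X Y ιX ιY U f ∧
  (∀ (k : ℕ) (x : X (k + 1)), scDown0 X ιX (k + 1) x ∈ U →
    IsLinearMap ℝ (Df k x) ∧ ∃ C : ℝ, ∀ h, ‖Df k x h‖ ≤ C * ‖h‖) ∧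
  (∀ k : ℕ, ContinuousOn (fun p : X (k + 1) × X k => Df k p.1 p.2)
    {p | scDown0 X ιX (k + 1) p.1 ∈ U}) ∧
  (∀ (k : ℕ) (x : X (k + 2)) (h : X (k + 1)), scDown0 X ιX (k + 2) x ∈ U →
    Df k (ιX (k + 1) x) (ιX k h) = ιY k (Df (k + 1) x h)) ∧
  (∀ x : X 1, scDown0 X ιX 1 x ∈ U → ∀ ε > (0 : ℝ), ∃ δ > (0 : ℝ), ∀ h : X 1,
    ‖h‖ ≤ δ → scDown0 X ιX 1 (x + h) ∈ U →
    ‖f 0 (ιX 0 (x + h)) - f 0 (ιX 0 x) - Df 0 x (ιX 0 h)‖ ≤ ε * ‖h‖)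

end ScMapsOn

/-- `f` is sc^m on the open set `U`, defined recursively: sc^{m+1} means the existence
of sc¹-differential data together with the tangent map `Tf(x,h) = (f x, D_x f h)` being
sc^m on the tangent set `TU = (U ∩ E₁) × E₀ ⊆ E₁ × E₀`. -/
def IsScNOn (m : ℕ) (X : ℕ → Type u) (Y : ℕ → Type v)
    [∀ k, NormedAddCommGroup (X k)] [∀ k, NormedSpace ℝ (X k)]
    [∀ k, NormedAddCommGroup (Y k)] [∀ k, NormedSpace ℝ (Y k)]
    (ιX : ∀ k, X (k + 1) →ₗ[ℝ] X k) (ιY : ∀ k, Y (k + 1) →ₗ[ℝ] Y k)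
    (U : Set (X 0)) (f : ∀ k, X k → Y k) : Prop :=
  match m with
  | 0 => IsSc0On X Y ιX ιY U f
  | m + 1 => ∃ Df : ∀ k, X (k + 1) → X k → Y k,
      IsSc1DataOn X Y ιX ιY U f Df ∧
      IsScNOn m (fun k => X (k + 1) × X k) (fun k => Y (k + 1) × Y k)
        (fun k => (ιX (k + 1)).prodMap (ιX k)) (fun k => (ιY (k + 1)).prodMap (ιY k))
        {p : X 1 × X 0 | scDown0 X ιX 1 p.1 ∈ U}
        (fun k p => (f (k + 1) p.1, Df k p.1 p.2))

/-- An sc-smooth retraction on the sc-Banach space `(X, ιX)`: an sc^∞ map defined on an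
open subset `U` of the level `0`, mapping `U` to itself and satisfying `r ∘ r = r`. -/
def IsScRetractionOn (X : ℕ → Type u)
    [∀ k, NormedAddCommGroup (X k)] [∀ k, NormedSpace ℝ (X k)]
    (ιX : ∀ k, X (k + 1) →ₗ[ℝ] X k) (U : Set (X 0)) (r : ∀ k, X k → X k) : Prop :=
  IsOpen U ∧ Set.MapsTo (r 0) U U ∧ (∀ x ∈ U, r 0 (r 0 x) = r 0 x) ∧
  (∀ m : ℕ, IsScNOn m X X ιX ιX U r)

section Helpers

variable {E : Type u} {F : Type v} [NormedAddCommGroup E] [NormedSpace ℝ E]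
  [NormedAddCommGroup F] [NormedSpace ℝ F]

/-- A positively homogeneous map bounded by 1 on a small ball is linearly bounded. -/
lemma sc_bound_of_small (T : E → F) (hT : ∀ (c : ℝ) (x : E), T (c • x) = c • T x)
    {δ : ℝ} (hδ : 0 < δ) (h : ∀ x : E, ‖x‖ ≤ δ → ‖T x‖ ≤ 1) (x : E) :
    ‖T x‖ ≤ δ⁻¹ * ‖x‖ := by
  rcases eq_or_ne x 0 with rfl | hx
  · have h0 : T 0 = 0 := by
      have := hT 0 0; simpa using this
    simp [h0]
  · have hxn : (0:ℝ) < ‖x‖ := norm_pos_iff.mpr hx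
    have hc : (0:ℝ) < δ / ‖x‖ := div_pos hδ hxn
    have hnorm : ‖(δ / ‖x‖) • x‖ = δ := by
      rw [norm_smul, Real.norm_of_nonneg hc.le, div_mul_cancel₀ _ hxn.ne']
    have hb := h _ hnorm.le
    have hrepr : T x = (‖x‖ / δ) • T ((δ / ‖x‖) • x) := by
      rw [← hT, smul_smul, div_mul_div_comm, mul_comm, div_self (by positivity), one_smul]
    rw [hrepr, norm_smul, Real.norm_of_nonneg (by positivity)]
    calc ‖x‖ / δ * ‖T ((δ / ‖x‖) • x)‖ ≤ ‖x‖ / δ * 1 := by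
          gcongr
      _ = δ⁻¹ * ‖x‖ := by ring
  
/-- A positively homogeneous map which is `o(‖x‖)` near `0` vanishes. -/
lemma sc_zero_of_forall_eps (T : E → F) (hT : ∀ (c : ℝ) (x : E), T (c • x) = c • T x)
    (h : ∀ ε > (0:ℝ), ∃ δ > (0:ℝ), ∀ x : E, ‖x‖ ≤ δ → ‖T x‖ ≤ ε * ‖x‖) (x : E) :
    T x = 0 := by
  have key : ∀ ε > (0:ℝ), ‖T x‖ ≤ ε * ‖x‖ := by
    intro ε hε
    obtain ⟨δ, hδ, hb⟩ := h ε hε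
    rcases eq_or_ne x 0 with rfl | hx
    · have h0 : T 0 = 0 := by have := hT 0 0; simpa using this
      simp [h0]
    · have hxn : (0:ℝ) < ‖x‖ := norm_pos_iff.mpr hx
      have hc : (0:ℝ) < δ / ‖x‖ := div_pos hδ hxn
      have hnorm : ‖(δ / ‖x‖) • x‖ = δ := by
        rw [norm_smul, Real.norm_of_nonneg hc.le, div_mul_cancel₀ _ hxn.ne']
      have hb2 := hb _ hnorm.le
      have hrepr : T x = (‖x‖ / δ) • T ((δ / ‖x‖) • x) := by
        rw [← hT, smul_smul, div_mul_div_comm, mul_comm, div_self (by positivity), one_smul]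
      rw [hrepr, norm_smul, Real.norm_of_nonneg (by positivity)]
      calc ‖x‖ / δ * ‖T ((δ / ‖x‖) • x)‖ ≤ ‖x‖ / δ * (ε * δ) := by
            gcongr
            rw [hnorm] at hb2; exact hb2
        _ = ε * ‖x‖ := by field_simp
  by_contra hne
  have hpos : (0:ℝ) < ‖T x‖ := norm_pos_iff.mpr hne
  have := key (‖T x‖ / (2 * (‖x‖ + 1))) (by positivity)
  have hlt : ‖T x‖ / (2 * (‖x‖ + 1)) * ‖x‖ < ‖T x‖ := by
    rw [div_mul_eq_mul_div, div_lt_iff₀ (by positivity)]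
    nlinarith [norm_nonneg x]
  linarith

end Helpers
set_option maxHeartbeats 2000000 in
/-- Key asymmetric step: the differential of `r'` at `p` restricts to the identity on the
range of the differential of `r` at `p`. -/
theorem sc_key (X : ℕ → Type u)
    [∀ k, NormedAddCommGroup (X k)] [∀ k, NormedSpace ℝ (X k)]
    (ιX : ∀ k, X (k + 1) →ₗ[ℝ] X k) (hsc : IsScBanach X ιX)
    (U U' : Set (X 0)) (r r' : ∀ k, X k → X k)
    (hr : IsScRetractionOn X ιX U r) (hr' : IsScRetractionOn X ιX U' r')
    (him : r 0 '' U = r' 0 '' U')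
    (Df Df' : ∀ k, X (k + 1) → X k → X k)
    (hDf : IsSc1DataOn X X ιX ιX U r Df) (hDf' : IsSc1DataOn X X ιX ιX U' r' Df')
    (p : X 1) (hp : scDown0 X ιX 1 p ∈ r 0 '' U) :
    ∀ v : X 0, Df' 0 p (Df 0 p v) = Df 0 p v := by
  obtain ⟨hinj, hcont, -, hloc, hdense⟩ := hsc
  obtain ⟨hUopen, hmaps, hidem, -⟩ := hr
  obtain ⟨hU'open, hmaps', hidem', -⟩ := hr'
  obtain ⟨⟨hrcont, hrcompat⟩, hlinDf, -, -, hquot⟩ := hDf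
  obtain ⟨-, hlinDf', hDcont', -, hquot'⟩ := hDf'
  -- basic point facts
  have hp1 : ιX 0 p ∈ r 0 '' U := hp
  have hp1' : ιX 0 p ∈ r' 0 '' U' := him ▸ hp1
  have hp0U : ιX 0 p ∈ U := by
    obtain ⟨x, hx, he⟩ := hp1; exact he ▸ hmaps hx
  have hp0U' : ιX 0 p ∈ U' := by
    obtain ⟨x, hx, he⟩ := hp1'; exact he ▸ hmaps' hx
  have hfix : r 0 (ιX 0 p) = ιX 0 p := by
    obtain ⟨x, hx, he⟩ := hp1; rw [← he]; exact hidem x hx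
  have hfix' : r' 0 (ιX 0 p) = ιX 0 p := by
    obtain ⟨x, hx, he⟩ := hp1'; rw [← he]; exact hidem' x hx
  have hfixO' : ∀ y ∈ U, r' 0 (r 0 y) = r 0 y := by
    intro y hy
    have : r 0 y ∈ r' 0 '' U' := him ▸ (Set.mem_image_of_mem _ hy)
    obtain ⟨x, hx, he⟩ := this; rw [← he]; exact hidem' x hx
  have hr1p : r 1 p = p := by
    apply hinj 0
    have := hrcompat 0 p hp0U
    rw [← this]; exact hfix
  -- bundled continuous linear maps
  let ι0L : X 1 →L[ℝ] X 0 := { toLinearMap := ιX 0, cont := hcont 0 }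
  let B : X 0 →L[ℝ] X 0 :=
    (IsLinearMap.mk' _ (hlinDf 0 p hp0U).1).mkContinuousOfExistsBound (hlinDf 0 p hp0U).2
  let B' : X 0 →L[ℝ] X 0 :=
    (IsLinearMap.mk' _ (hlinDf' 0 p hp0U').1).mkContinuousOfExistsBound (hlinDf' 0 p hp0U').2
  have hBapp : ∀ w, B w = Df 0 p w := fun w => rfl
  have hB'app : ∀ w, B' w = Df' 0 p w := fun w => rfl
  -- bundled differentials of r' at points near p
  have hB'y : ∀ y : X 1, ιX 0 y ∈ U' → ∃ T : X 0 →L[ℝ] X 0, ∀ w, T w = Df' 0 y w :=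
    fun y hy =>
      ⟨(IsLinearMap.mk' _ (hlinDf' 0 y hy).1).mkContinuousOfExistsBound (hlinDf' 0 y hy).2,
        fun w => rfl⟩
  have hU'1open : IsOpen ((fun x : X 1 => ιX 0 x) ⁻¹' U') := hU'open.preimage (hcont 0)
  have hU1open : IsOpen ((fun x : X 1 => ιX 0 x) ⁻¹' U) := hUopen.preimage (hcont 0)
  -- Fréchet differentiability of r' ∘ ι0 : X1 → X0 at points of U'₁
  have hgdiff : ∀ (y : X 1), ιX 0 y ∈ U' → ∀ T : X 0 →L[ℝ] X 0, (∀ w, T w = Df' 0 y w) →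
      HasFDerivAt (fun x : X 1 => r' 0 (ιX 0 x)) (T.comp ι0L) y := by
    intro y hy T hT
    rw [hasFDerivAt_iff_isLittleO_nhds_zero, Asymptotics.isLittleO_iff]
    intro c hc
    obtain ⟨δ, hδ, hq⟩ := hquot' y hy c hc
    have h1 : ∀ᶠ h : X 1 in 𝓝 0, ‖h‖ ≤ δ := by
      filter_upwards [Metric.closedBall_mem_nhds (0 : X 1) hδ] with h hh
      simpa [mem_closedBall_zero_iff] using hh
    have h2 : ∀ᶠ h : X 1 in 𝓝 0, ιX 0 (y + h) ∈ U' := by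
      have hcont2 : Continuous fun h : X 1 => ιX 0 (y + h) :=
        (hcont 0).comp (continuous_const.add continuous_id)
      have hmem : {h : X 1 | ιX 0 (y + h) ∈ U'} ∈ 𝓝 (0 : X 1) := by
        apply hcont2.continuousAt.preimage_mem_nhds
        rw [add_zero]
        exact hU'open.mem_nhds hy
      exact Filter.eventually_of_mem hmem fun h hh => hh
    filter_upwards [h1, h2] with h hh1 hh2
    have := hq h hh1 hh2
    simpa [hT, Real.norm_eq_abs, show ∀ h, ι0L h = ιX 0 h from fun h => rfl] using this
  -- uniform bound for Df' near p
  obtain ⟨M, hM0, δM, hδM, hMb⟩ :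
      ∃ M > (0:ℝ), ∃ δM > (0:ℝ), ∀ y : X 1, ‖y - p‖ ≤ δM → ιX 0 y ∈ U' ∧
        ∀ w : X 0, ‖Df' 0 y w‖ ≤ M * ‖w‖ := by
    obtain ⟨δU', hδU', hballU'⟩ := Metric.isOpen_iff.mp hU'1open p hp0U'
    have hVopen : IsOpen {q : X 1 × X 0 | ιX 0 q.1 ∈ U'} := hU'1open.preimage continuous_fst
    have hCA : ContinuousAt (fun q : X 1 × X 0 => Df' 0 q.1 q.2) (p, (0 : X 0)) :=
      (hDcont' 0).continuousAt (hVopen.mem_nhds hp0U')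
    rw [Metric.continuousAt_iff] at hCA
    obtain ⟨δ₁, hδ₁, hc1⟩ := hCA 1 one_pos
    have hδ'pos : (0:ℝ) < min (δ₁ / 2) (δU' / 2) := lt_min (by positivity) (by positivity)
    set δ' : ℝ := min (δ₁ / 2) (δU' / 2) with hδ'def
    refine ⟨δ'⁻¹, by positivity, δ', hδ'pos, fun y hy => ?_⟩
    have hyU' : ιX 0 y ∈ U' := by
      apply hballU'
      rw [Metric.mem_ball, dist_eq_norm]
      calc ‖y - p‖ ≤ δ' := hy
        _ ≤ δU' / 2 := min_le_right _ _
        _ < δU' := by linarith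
    refine ⟨hyU', ?_⟩
    have hlin := (hlinDf' 0 y hyU').1
    intro w
    apply sc_bound_of_small (Df' 0 y) (fun c x => hlin.map_smul c x) hδ'pos _ w
    intro x hx
    have hd : dist ((y, x) : X 1 × X 0) (p, (0 : X 0)) < δ₁ := by
      rw [Prod.dist_eq]
      apply max_lt
      · rw [dist_eq_norm]
        calc ‖y - p‖ ≤ δ' := hy
          _ ≤ δ₁ / 2 := min_le_left _ _
          _ < δ₁ := by linarith
      · rw [dist_zero_right]
        calc ‖x‖ ≤ δ' := hx
          _ ≤ δ₁ / 2 := min_le_left _ _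
          _ < δ₁ := by linarith
    have hlt := hc1 hd
    rw [dist_eq_norm] at hlt
    have hz : Df' 0 p (0 : X 0) = 0 := (hlinDf' 0 p hp0U').1.map_zero
    simp only [hz, sub_zero] at hlt
    exact hlt.le
  -- the compact set K
  obtain ⟨ρ, hρ, hK⟩ :
      ∃ ρ > (0:ℝ), ∃ K : Set (X 0), IsCompact K ∧
        ∀ v : X 1, ‖v‖ ≤ ρ → Df 0 p (ιX 0 v) ∈ K := by
    obtain ⟨O, hOnhds, hOcpt⟩ := hloc 0 1 one_pos (0 : X (0 + 1))
    obtain ⟨ρ₂, hρ₂, hball⟩ := Metric.mem_nhds_iff.mp hOnhds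
    refine ⟨ρ₂ / 2, by positivity, ⇑B '' closure (⇑(scInclDown X ιX 0 1) '' O),
      (hOcpt.image B.continuous), ?_⟩
    intro v hv
    have hvO : v ∈ O := hball (by rw [Metric.mem_ball, dist_zero_right]; linarith)
    exact ⟨scInclDown X ιX 0 1 v, subset_closure ⟨v, hvO, rfl⟩, rfl⟩
  obtain ⟨K, hKcpt, hKmem⟩ := hK
  -- uniform continuity of Df' on K near p
  have hKunif : ∀ ε > (0:ℝ), ∃ δ > (0:ℝ), ∀ y : X 1, ‖y - p‖ ≤ δ → ιX 0 y ∈ U' →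
      ∀ w ∈ K, ‖Df' 0 y w - Df' 0 p w‖ ≤ ε := by
    intro ε hε
    have hVopen : IsOpen {q : X 1 × X 0 | ιX 0 q.1 ∈ U'} := hU'1open.preimage continuous_fst
    have hev : ∀ᶠ y : X 1 in 𝓝 p, ∀ w ∈ K, ‖Df' 0 y w - Df' 0 p w‖ ≤ ε := by
      apply hKcpt.eventually_forall_of_forall_eventually
      intro w hw
      have hc1 : ContinuousAt (fun q : X 1 × X 0 => Df' 0 q.1 q.2) (p, w) :=
        (hDcont' 0).continuousAt (hVopen.mem_nhds hp0U')
      have hc2 : ContinuousAt (fun q : X 1 × X 0 => B' q.2) (p, w) :=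
        (B'.continuous.comp continuous_snd).continuousAt
      have hc : ContinuousAt (fun q : X 1 × X 0 => ‖Df' 0 q.1 q.2 - B' q.2‖) (p, w) :=
        (hc1.sub hc2).norm
      have h0 : ‖Df' 0 p w - B' w‖ = 0 := by rw [hB'app, sub_self, norm_zero]
      have ht : Filter.Tendsto (fun q : X 1 × X 0 => ‖Df' 0 q.1 q.2 - B' q.2‖)
          (𝓝 (p, w)) (𝓝 0) := by
        have hc' : Filter.Tendsto (fun q : X 1 × X 0 => ‖Df' 0 q.1 q.2 - B' q.2‖)
            (𝓝 (p, w)) (𝓝 ‖Df' 0 p w - B' w‖) := hc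
        rwa [h0] at hc'
      filter_upwards [ht.eventually_lt_const hε] with q hq
      exact hq.le
    rw [Metric.eventually_nhds_iff] at hev
    obtain ⟨δ, hδ, hd⟩ := hev
    refine ⟨δ / 2, by positivity, fun y hy _ w hw => ?_⟩
    exact hd (by rw [dist_eq_norm]; linarith) w hw
  have hMp : ∀ w : X 0, ‖Df' 0 p w‖ ≤ M * ‖w‖ := (hMb p (by simpa using hδM.le)).2
  have hBlin : IsLinearMap ℝ (Df 0 p) := (hlinDf 0 p hp0U).1
  have hplin : IsLinearMap ℝ (Df' 0 p) := (hlinDf' 0 p hp0U').1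
  -- the main estimate
  have main : ∀ ε > (0:ℝ), ∃ δ > (0:ℝ), ∀ h : X 1, ‖h‖ ≤ δ →
      ‖Df 0 p (ιX 0 h) - Df' 0 p (Df 0 p (ιX 0 h))‖ ≤ ((2 + 3 * M) * ε) * ‖h‖ := by
    intro ε hε
    obtain ⟨δq, hδq, hq⟩ := hquot p hp0U ε hε
    obtain ⟨δU, hδU, hballU⟩ := Metric.isOpen_iff.mp hU1open p hp0U
    obtain ⟨δK, hδK, hKu⟩ := hKunif (ε * (ρ / 2)) (by positivity)
    have hr1c : ContinuousAt (r 1) p := (hrcont 1).continuousAt (hU1open.mem_nhds hp0U)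
    rw [Metric.continuousAt_iff] at hr1c
    obtain ⟨δr, hδr, hrc⟩ := hr1c (min δM δK) (lt_min hδM hδK)
    refine ⟨min (min δq (δU / 2)) (δr / 2),
      lt_min (lt_min hδq (by positivity)) (by positivity), fun h hh => ?_⟩
    have hhq : ‖h‖ ≤ δq := hh.trans ((min_le_left _ _).trans (min_le_left _ _))
    have hhU : ‖h‖ ≤ δU / 2 := hh.trans ((min_le_left _ _).trans (min_le_right _ _))
    have hhr : ‖h‖ ≤ δr / 2 := hh.trans (min_le_right _ _)
    have hphU : ιX 0 (p + h) ∈ U := by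
      apply hballU
      rw [Metric.mem_ball, dist_eq_norm, add_sub_cancel_left]
      linarith
    rcases eq_or_ne h 0 with rfl | hne
    · have hz : ιX 0 (0 : X 1) = 0 := map_zero _
      simp [hz, hBlin.map_zero, hplin.map_zero]
    have hh0 : (0:ℝ) < ‖h‖ := norm_pos_iff.mpr hne
    set u : X 1 := r 1 (p + h) - p with hudef
    have hu : ‖u‖ ≤ min δM δK := by
      have hd := hrc (x := p + h) (by rw [dist_eq_norm, add_sub_cancel_left]; linarith)
      rw [hr1p, dist_eq_norm] at hd
      exact hd.le
    have huM : ‖u‖ ≤ δM := hu.trans (min_le_left _ _)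
    have huK : ‖u‖ ≤ δK := hu.trans (min_le_right _ _)
    have he : ‖r 0 (ιX 0 (p + h)) - r 0 (ιX 0 p) - Df 0 p (ιX 0 h)‖ ≤ ε * ‖h‖ :=
      hq h hhq hphU
    set e : X 0 := r 0 (ιX 0 (p + h)) - r 0 (ιX 0 p) - Df 0 p (ιX 0 h) with hedef
    have hu0 : ιX 0 u = Df 0 p (ιX 0 h) + e := by
      have h1 : ιX 0 u = r 0 (ιX 0 (p + h)) - ιX 0 p := by
        rw [hudef, map_sub, hrcompat 0 (p + h) hphU]
      rw [h1, hedef, hfix]; abel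
    have hseg : ∀ t ∈ Set.Icc (0:ℝ) 1, ‖(p + t • u) - p‖ ≤ δM ∧ ‖(p + t • u) - p‖ ≤ δK := by
      intro t ht
      have hn : ‖(p + t • u) - p‖ = |t| * ‖u‖ := by
        rw [add_sub_cancel_left, norm_smul, Real.norm_eq_abs]
      have habs : |t| ≤ 1 := abs_le.mpr ⟨by linarith [ht.1], ht.2⟩
      constructor <;> rw [hn] <;> nlinarith [norm_nonneg u, abs_nonneg t]
    have hMVT : ‖ιX 0 u - Df' 0 p (ιX 0 u)‖ ≤ (1 + 2 * M) * (ε * ‖h‖) := by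
      set c : ℝ → X 0 := fun t => r' 0 (ιX 0 (p + t • u)) - t • Df' 0 p (ιX 0 u) with hcdef
      set c' : ℝ → X 0 := fun t => Df' 0 (p + t • u) (ιX 0 u) - Df' 0 p (ιX 0 u) with hc'def
      have hderiv : ∀ t ∈ Set.Icc (0:ℝ) 1, HasDerivWithinAt c (c' t) (Set.Icc 0 1) t := by
        intro t ht
        obtain ⟨hyU', hyM⟩ := hMb (p + t • u) (hseg t ht).1
        obtain ⟨T, hT⟩ := hB'y (p + t • u) hyU'
        have hF := hgdiff (p + t • u) hyU' T hT
        have hline : HasDerivAt (fun s : ℝ => p + s • u) u t := by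
          simpa using ((hasDerivAt_id t).smul_const u).const_add p
        have h1 : HasDerivAt (fun s : ℝ => r' 0 (ιX 0 (p + s • u))) ((T.comp ι0L) u) t :=
          by have := hF.comp_hasDerivAt t hline; exact this
        have h2 : HasDerivAt (fun s : ℝ => s • Df' 0 p (ιX 0 u)) (Df' 0 p (ιX 0 u)) t := by
          simpa using (hasDerivAt_id t).smul_const (Df' 0 p (ιX 0 u))
        have h3 := h1.sub h2
        have h4 : (T.comp ι0L) u - Df' 0 p (ιX 0 u) = c' t := by
          rw [hc'def]
          simp only [ContinuousLinearMap.comp_apply]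
          rw [hT]
          rfl
        rw [h4] at h3
        exact h3.hasDerivWithinAt
      have hbound : ∀ t ∈ Set.Ico (0:ℝ) 1, ‖c' t‖ ≤ (1 + 2 * M) * (ε * ‖h‖) := by
        intro t ht
        have htIcc : t ∈ Set.Icc (0:ℝ) 1 := ⟨ht.1, ht.2.le⟩
        obtain ⟨hyU', hyM⟩ := hMb (p + t • u) (hseg t htIcc).1
        have hylin := (hlinDf' 0 (p + t • u) hyU').1
        have hsplit : c' t = (Df' 0 (p + t • u) (Df 0 p (ιX 0 h)) - Df' 0 p (Df 0 p (ιX 0 h)))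
            + (Df' 0 (p + t • u) e - Df' 0 p e) := by
          rw [hc'def]
          simp only
          rw [hu0, hylin.map_add, hplin.map_add]
          abel
        have hterm2 : ‖Df' 0 (p + t • u) e - Df' 0 p e‖ ≤ 2 * M * (ε * ‖h‖) := by
          have ha := hyM e
          have hb := hMp e
          have hc2 : ‖Df' 0 (p + t • u) e - Df' 0 p e‖ ≤ M * ‖e‖ + M * ‖e‖ :=
            (norm_sub_le _ _).trans (add_le_add ha hb)
          nlinarith [norm_nonneg e]
        have hterm1 : ‖Df' 0 (p + t • u) (Df 0 p (ιX 0 h)) - Df' 0 p (Df 0 p (ιX 0 h))‖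
            ≤ ε * ‖h‖ := by
          set s : ℝ := (ρ / 2) * ‖h‖⁻¹ with hsdef
          have hs : 0 < s := by rw [hsdef]; positivity
          have hv : ‖s • h‖ ≤ ρ := by
            rw [norm_smul, Real.norm_eq_abs, abs_of_pos hs, hsdef]
            rw [mul_assoc, inv_mul_cancel₀ hh0.ne', mul_one]
            linarith
          have hKv := hKmem (s • h) hv
          have hKe := hKu (p + t • u) (hseg t htIcc).2 hyU' _ hKv
          have hrepr : Df 0 p (ιX 0 h) = s⁻¹ • Df 0 p (ιX 0 (s • h)) := by
            rw [map_smul, hBlin.map_smul, smul_smul, inv_mul_cancel₀ hs.ne', one_smul]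
          rw [hrepr, hylin.map_smul, hplin.map_smul, ← smul_sub, norm_smul,
            Real.norm_eq_abs, abs_of_pos (inv_pos.mpr hs)]
          have hs' : s⁻¹ * (ε * (ρ / 2)) = ε * ‖h‖ := by
            rw [hsdef]
            field_simp
          rw [← hs']
          gcongr
        rw [hsplit]
        calc ‖(Df' 0 (p + t • u) (Df 0 p (ιX 0 h)) - Df' 0 p (Df 0 p (ιX 0 h)))
              + (Df' 0 (p + t • u) e - Df' 0 p e)‖
            ≤ ‖Df' 0 (p + t • u) (Df 0 p (ιX 0 h)) - Df' 0 p (Df 0 p (ιX 0 h))‖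
              + ‖Df' 0 (p + t • u) e - Df' 0 p e‖ := norm_add_le _ _
          _ ≤ ε * ‖h‖ + 2 * M * (ε * ‖h‖) := add_le_add hterm1 hterm2
          _ = (1 + 2 * M) * (ε * ‖h‖) := by ring
      have hfinal := norm_image_sub_le_of_norm_deriv_le_segment' hderiv hbound 1
        (Set.right_mem_Icc.mpr zero_le_one)
      have hc1 : c 1 = r 0 (ιX 0 (p + h)) - Df' 0 p (ιX 0 u) := by
        rw [hcdef]
        simp only [one_smul]
        have hpu : p + u = r 1 (p + h) := by rw [hudef]; abel
        rw [hpu, ← hrcompat 0 (p + h) hphU, hfixO' _ hphU]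
      have hc0 : c 0 = ιX 0 p := by
        rw [hcdef]
        simp [hfix']
      have hdiffc : c 1 - c 0 = ιX 0 u - Df' 0 p (ιX 0 u) := by
        rw [hc1, hc0]
        have h1 : ιX 0 u = r 0 (ιX 0 (p + h)) - ιX 0 p := by
          rw [hudef, map_sub, hrcompat 0 (p + h) hphU]
        rw [h1]; abel
      calc ‖ιX 0 u - Df' 0 p (ιX 0 u)‖ = ‖c 1 - c 0‖ := by rw [hdiffc]
        _ ≤ (1 + 2 * M) * (ε * ‖h‖) * (1 - 0) := hfinal
        _ = (1 + 2 * M) * (ε * ‖h‖) := by ring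
    -- assemble
    have hDfh : Df 0 p (ιX 0 h) = ιX 0 u - e := by rw [hu0]; abel
    have hfin : Df 0 p (ιX 0 h) - Df' 0 p (Df 0 p (ιX 0 h))
        = ((ιX 0 u - Df' 0 p (ιX 0 u)) - e) + Df' 0 p e := by
      rw [hDfh, hplin.map_sub]
      abel
    rw [hfin]
    have hn1 : ‖((ιX 0 u - Df' 0 p (ιX 0 u)) - e) + Df' 0 p e‖
        ≤ ‖ιX 0 u - Df' 0 p (ιX 0 u)‖ + ‖e‖ + ‖Df' 0 p e‖ :=
      (norm_add_le _ _).trans (add_le_add (norm_sub_le _ _) le_rfl)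
    have hn2 := hMp e
    nlinarith [norm_nonneg e, norm_nonneg (ιX 0 u - Df' 0 p (ιX 0 u)), hh0.le, hM0.le]
  -- conclude equality on the dense image of level one, then everywhere
  have hvanish : ∀ h : X 1, Df 0 p (ιX 0 h) - Df' 0 p (Df 0 p (ιX 0 h)) = 0 := by
    intro h
    apply sc_zero_of_forall_eps (fun h : X 1 => Df 0 p (ιX 0 h) - Df' 0 p (Df 0 p (ιX 0 h)))
    · intro c x
      have : ιX 0 (c • x) = c • ιX 0 x := map_smul _ _ _
      rw [this, ← hBapp, ← hBapp, map_smul, ← hB'app, ← hB'app, map_smul, smul_sub]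
    · intro ε hε
      obtain ⟨δ, hδ, hb⟩ := main (ε / (2 + 3 * M)) (by positivity)
      refine ⟨δ, hδ, fun x hx => ?_⟩
      have := hb x hx
      have he : (2 + 3 * M) * (ε / (2 + 3 * M)) = ε := by field_simp
      rwa [he] at this
  have hdense0 : Dense (Set.range (fun h : X 1 => ιX 0 h)) := by
    apply Dense.mono _ (hdense 0)
    intro x hx
    obtain ⟨y, hy⟩ := hx 1
    exact ⟨y, hy⟩
  have heq : (fun w => Df' 0 p (Df 0 p w)) = fun w => Df 0 p w := by
    apply Continuous.ext_on hdense0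
    · exact (B'.comp B).continuous
    · exact B.continuous
    · rintro x ⟨h, rfl⟩
      exact (sub_eq_zero.mp (hvanish h)).symm
  intro v
  exact congrFun heq v
/-- **Statement 14** (Lemma 4.13 (i) of the paper): two sc-smooth retractions with the
same image `O` have the same tangent: at every smooth-enough point `p ∈ O ∩ E₁` the
images of the level-0 differentials of the two retractions coincide, so the tangent
`T_p O = D_p r (E₀)` of the sc-retract is well defined. -/
theorem stmt14 (X : ℕ → Type u)
    [∀ k, NormedAddCommGroup (X k)] [∀ k, NormedSpace ℝ (X k)]
    (ιX : ∀ k, X (k + 1) →ₗ[ℝ] X k) (hsc : IsScBanach X ιX)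
    (U U' : Set (X 0)) (r r' : ∀ k, X k → X k)
    (hr : IsScRetractionOn X ιX U r) (hr' : IsScRetractionOn X ιX U' r')
    (him : r 0 '' U = r' 0 '' U')
    (Df Df' : ∀ k, X (k + 1) → X k → X k)
    (hDf : IsSc1DataOn X X ιX ιX U r Df) (hDf' : IsSc1DataOn X X ιX ιX U' r' Df')
    (p : X 1) (hp : scDown0 X ιX 1 p ∈ r 0 '' U) :
    Set.range (Df 0 p) = Set.range (Df' 0 p) := by
  apply Set.Subset.antisymm
  · rintro _ ⟨v, rfl⟩
    exact ⟨Df 0 p v, sc_key X ιX hsc U U' r r' hr hr' him Df Df' hDf hDf' p hp v⟩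
  · rintro _ ⟨v, rfl⟩
    have hp' : scDown0 X ιX 1 p ∈ r' 0 '' U' := him ▸ hp
    exact ⟨Df' 0 p v, sc_key X ιX hsc U' U r' r hr' hr him.symm Df' Df hDf' hDf p hp' v⟩
end

section
/- Let 𝔼 and 𝔽 be sc-Banach spaces, let O ⊆ E₀ be an sc-retract, let f : O → F₀ be a map, and let k ∈ ℕ ∪ {∞}. If r : U → U and r′ : U′ → U′ are two sc-smooth retractions on open subsets of E₀ with r(U) = r′(U′) = O, then f ∘ r : U → 𝔽 is sc^k if and only if f ∘ r′ : U′ → 𝔽 is sc^k. Hence the notion 'f : O → 𝔽 is sc^k' (defined by requiring f ∘ r to be sc^k for some sc-smooth retraction r with image O) is independent of the choice of retraction. -/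
open Bornology Topology Filter

universe u v

/-- `g : X 0 → Y 0` "is sc^m on `U` as a map of scales": some family of level maps
agreeing with `g` on `U` at level `0` is sc^m on `U`. -/
def IsScNOnAs (m : ℕ) (X : ℕ → Type u) (Y : ℕ → Type v)
    [∀ k, NormedAddCommGroup (X k)] [∀ k, NormedSpace ℝ (X k)]
    [∀ k, NormedAddCommGroup (Y k)] [∀ k, NormedSpace ℝ (Y k)]
    (ιX : ∀ k, X (k + 1) →ₗ[ℝ] X k) (ιY : ∀ k, Y (k + 1) →ₗ[ℝ] Y k)
    (U : Set (X 0)) (g : X 0 → Y 0) : Prop :=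
  ∃ G : ∀ k, X k → Y k, (∀ x ∈ U, G 0 x = g x) ∧ IsScNOn m X Y ιX ιY U G


universe u₁ u₂ u₃

section CompHelpers

variable {A : ℕ → Type u₁} {B : ℕ → Type u₂} {C : ℕ → Type u₃}
  [∀ k, NormedAddCommGroup (A k)] [∀ k, NormedSpace ℝ (A k)]
  [∀ k, NormedAddCommGroup (B k)] [∀ k, NormedSpace ℝ (B k)]
  [∀ k, NormedAddCommGroup (C k)] [∀ k, NormedSpace ℝ (C k)]
  {ιA : ∀ k, A (k + 1) →ₗ[ℝ] A k} {ιB : ∀ k, B (k + 1) →ₗ[ℝ] B k}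
  {ιC : ∀ k, C (k + 1) →ₗ[ℝ] C k}

lemma sc0_down_compat {U : Set (A 0)} {f : ∀ k, A k → B k}
    (hcompat : ∀ (k : ℕ) (x : A (k + 1)), scDown0 A ιA (k + 1) x ∈ U →
      f k (ιA k x) = ιB k (f (k + 1) x)) :
    ∀ (k : ℕ) (x : A k), scDown0 A ιA k x ∈ U →
      scDown0 B ιB k (f k x) = f 0 (scDown0 A ιA k x) := by
  intro k
  induction k with
  | zero => intro x _; rfl
  | succ k ih =>
    intro x hx
    show scDown0 B ιB k (ιB k (f (k + 1) x)) = f 0 (scDown0 A ιA k (ιA k x))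
    rw [← hcompat k x hx]
    exact ih (ιA k x) hx

lemma sc0_comp {U : Set (A 0)} {V : Set (B 0)} {R : ∀ k, A k → B k} {G : ∀ k, B k → C k}
    (hmaps : Set.MapsTo (R 0) U V)
    (hR : IsSc0On A B ιA ιB U R) (hG : IsSc0On B C ιB ιC V G) :
    IsSc0On A C ιA ιC U (fun k => G k ∘ R k) := by
  have hdown : ∀ (k : ℕ) (x : A k), scDown0 A ιA k x ∈ U → scDown0 B ιB k (R k x) ∈ V := by
    intro k x hx
    rw [sc0_down_compat hR.2 k x hx]
    exact hmaps hx
  constructor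
  · intro k
    exact (hG.1 k).comp (hR.1 k) (fun x hx => hdown k x hx)
  · intro k x hx
    show G k (R k (ιA k x)) = ιC k (G (k + 1) (R (k + 1) x))
    rw [hR.2 k x hx]
    exact hG.2 k (R (k + 1) x) (hdown (k + 1) x hx)

lemma key_estimate {V : Set (B 0)} (hV : IsOpen V) (hιB : Continuous (ιB 0))
    {T : B 1 × B 0 → C 0}
    (hT : ContinuousOn T {p : B 1 × B 0 | ιB 0 p.1 ∈ V})
    {y : B 1} (hy : ιB 0 y ∈ V)
    {K : Set (B 0)} (hK : IsCompact K)
    {ε : ℝ} (hε : 0 < ε) :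
    ∃ δ > 0, ∀ (y' : B 1) (e e₀ : B 0), e₀ ∈ K → ‖y' - y‖ ≤ δ → ‖e - e₀‖ ≤ δ →
      ‖T (y', e) - T (y, e)‖ ≤ ε := by
  set S : Set (B 1 × B 0) := {p | ιB 0 p.1 ∈ V} with hS
  have hSopen : IsOpen S := hV.preimage (hιB.comp continuous_fst)
  have hmaps : Set.MapsTo (fun p : B 1 × B 0 => ((y, p.2) : B 1 × B 0)) S S := fun p _ => hy
  have hF : ContinuousOn (fun p : B 1 × B 0 => T p - T (y, p.2)) S :=
    hT.sub (hT.comp ((continuous_const.prodMk continuous_snd).continuousOn) hmaps)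
  have hO : IsOpen (S ∩ (fun p : B 1 × B 0 => T p - T (y, p.2)) ⁻¹' Metric.ball 0 ε) :=
    hF.isOpen_inter_preimage hSopen Metric.isOpen_ball
  have hsub : (({y} : Set (B 1)) ×ˢ K) ⊆
      S ∩ (fun p : B 1 × B 0 => T p - T (y, p.2)) ⁻¹' Metric.ball 0 ε := by
    rintro ⟨y₁, e⟩ ⟨hy₁, he⟩
    rcases hy₁ with rfl
    refine ⟨hy, ?_⟩
    simp [Metric.mem_ball, hε]
  obtain ⟨δ, hδpos, hδ⟩ :=
    (isCompact_singleton.prod hK).exists_cthickening_subset_open hO hsub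
  refine ⟨δ, hδpos, ?_⟩
  intro y' e e₀ he₀ h1 h2
  have hmem : ((y', e) : B 1 × B 0) ∈ Metric.cthickening δ (({y} : Set (B 1)) ×ˢ K) := by
    refine Metric.mem_cthickening_of_dist_le ((y', e) : B 1 × B 0) ((y, e₀) : B 1 × B 0) δ
      ((({y} : Set (B 1)) ×ˢ K)) ⟨rfl, he₀⟩ ?_
    rw [Prod.dist_eq]
    exact max_le (by rwa [dist_eq_norm]) (by rwa [dist_eq_norm])
  have h3 := (hδ hmem).2
  simp only [Set.mem_preimage, Metric.mem_ball, dist_zero_right] at h3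
  exact h3.le

lemma hasFDerivAt_of_scQuot {V : Set (B 0)} (hV : IsOpen V) (hιB : Continuous (ιB 0))
    {G0 : B 0 → C 0} {DG0 : B 1 → B 0 → C 0}
    {z : B 1} (hz : ιB 0 z ∈ V) (L : B 1 →L[ℝ] C 0)
    (hL : ∀ w, L w = DG0 z (ιB 0 w))
    (hquot : ∀ ε > (0 : ℝ), ∃ δ > (0 : ℝ), ∀ h : B 1, ‖h‖ ≤ δ → ιB 0 (z + h) ∈ V →
      ‖G0 (ιB 0 (z + h)) - G0 (ιB 0 z) - DG0 z (ιB 0 h)‖ ≤ ε * ‖h‖) :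
    HasFDerivAt (fun w : B 1 => G0 (ιB 0 w)) L z := by
  rw [hasFDerivAt_iff_isLittleO_nhds_zero, Asymptotics.isLittleO_iff]
  intro c hc
  obtain ⟨δ, hδpos, hδ⟩ := hquot c hc
  have h1 : {h : B 1 | ιB 0 (z + h) ∈ V} ∈ 𝓝 (0 : B 1) := by
    have hcont : Continuous fun h : B 1 => ιB 0 (z + h) := hιB.comp (continuous_add_left z)
    exact (hV.preimage hcont).mem_nhds (by simpa using hz)
  filter_upwards [Metric.closedBall_mem_nhds (0 : B 1) hδpos, h1] with h hh hhV
  have hh' : ‖h‖ ≤ δ := by simpa [dist_zero_right] using hh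
  have hres := hδ h hh' hhV
  rw [hL]
  simpa using hres

end CompHelpers

set_option maxHeartbeats 2000000 in
theorem isScNOn_comp :
    ∀ (m : ℕ) (A : ℕ → Type u₁) (B : ℕ → Type u₂) (C : ℕ → Type u₃)
      [∀ k, NormedAddCommGroup (A k)] [∀ k, NormedSpace ℝ (A k)]
      [∀ k, NormedAddCommGroup (B k)] [∀ k, NormedSpace ℝ (B k)]
      [∀ k, NormedAddCommGroup (C k)] [∀ k, NormedSpace ℝ (C k)]
      (ιA : ∀ k, A (k + 1) →ₗ[ℝ] A k) (ιB : ∀ k, B (k + 1) →ₗ[ℝ] B k)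
      (ιC : ∀ k, C (k + 1) →ₗ[ℝ] C k)
      (hAc : ∀ k, Continuous (ιA k))
      (hAK : ∀ k, ∃ K : Set (A k), IsCompact K ∧ ιA k '' Metric.closedBall 0 1 ⊆ K)
      (hBc : ∀ k, Continuous (ιB k))
      (U : Set (A 0)) (V : Set (B 0)) (hV : IsOpen V)
      (R : ∀ k, A k → B k) (G : ∀ k, B k → C k)
      (hmaps : Set.MapsTo (R 0) U V)
      (hR : IsScNOn m A B ιA ιB U R) (hG : IsScNOn m B C ιB ιC V G),
      IsScNOn m A C ιA ιC U (fun k => G k ∘ R k) := by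
  intro m
  induction m with
  | zero =>
    intro A B C _ _ _ _ _ _ ιA ιB ιC hAc hAK hBc U V hV R G hmaps hR hG
    exact sc0_comp hmaps hR hG
  | succ m ih =>
    intro A B C _ _ _ _ _ _ ιA ιB ιC hAc hAK hBc U V hV R G hmaps hR hG
    obtain ⟨DR, hRdata, hRT⟩ := hR
    obtain ⟨DG, hGdata, hGT⟩ := hG
    have hdown : ∀ (k : ℕ) (x : A k), scDown0 A ιA k x ∈ U →
        scDown0 B ιB k (R k x) ∈ V := by
      intro k x hx
      rw [sc0_down_compat hRdata.1.2 k x hx]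
      exact hmaps hx
    refine ⟨fun k x h => DG k (R (k + 1) x) (DR k x h), ⟨?_, ?_, ?_, ?_, ?_⟩, ?_⟩
    · exact sc0_comp hmaps hRdata.1 hGdata.1
    · intro k x hx
      obtain ⟨hlinR, CR, hCR⟩ := hRdata.2.1 k x hx
      obtain ⟨hlinG, CG, hCG⟩ := hGdata.2.1 k (R (k + 1) x) (hdown (k + 1) x hx)
      refine ⟨⟨?_, ?_⟩, ⟨max CG 0 * CR, fun h => ?_⟩⟩
      · intro a b
        show DG k (R (k + 1) x) (DR k x (a + b)) =
          DG k (R (k + 1) x) (DR k x a) + DG k (R (k + 1) x) (DR k x b)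
        rw [hlinR.map_add, hlinG.map_add]
      · intro c a
        show DG k (R (k + 1) x) (DR k x (c • a)) = c • DG k (R (k + 1) x) (DR k x a)
        rw [hlinR.map_smul, hlinG.map_smul]
      · calc ‖DG k (R (k + 1) x) (DR k x h)‖ ≤ CG * ‖DR k x h‖ := hCG _
          _ ≤ max CG 0 * ‖DR k x h‖ :=
              mul_le_mul_of_nonneg_right (le_max_left _ _) (norm_nonneg _)
          _ ≤ max CG 0 * (CR * ‖h‖) :=
              mul_le_mul_of_nonneg_left (hCR h) (le_max_right _ _)
          _ = max CG 0 * CR * ‖h‖ := by ring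
    · intro k
      have hinner : ContinuousOn
          (fun p : A (k + 1) × A k => ((R (k + 1) p.1, DR k p.1 p.2) : B (k + 1) × B k))
          {p : A (k + 1) × A k | scDown0 A ιA (k + 1) p.1 ∈ U} := by
        apply ContinuousOn.prodMk
        · exact (hRdata.1.1 (k + 1)).comp continuousOn_fst (fun p hp => hp)
        · exact hRdata.2.2.1 k
      exact (hGdata.2.2.1 k).comp hinner (fun p hp => hdown (k + 1) p.1 hp)
    · intro k x h hx
      show DG k (R (k + 1) (ιA (k + 1) x)) (DR k (ιA (k + 1) x) (ιA k h))
          = ιC k (DG (k + 1) (R (k + 2) x) (DR (k + 1) x h))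
      rw [hRdata.1.2 (k + 1) x hx, hRdata.2.2.2.1 k x h hx]
      exact hGdata.2.2.2.1 k (R (k + 2) x) (DR (k + 1) x h) (hdown (k + 2) x hx)
    · -- the sc¹ difference quotient for the composition (the analytic core)
      intro x hx ε hε
      set y : B 1 := R 1 x with hy_def
      have hy : ιB 0 y ∈ V := hdown 1 x hx
      obtain ⟨hGlin, CG, hCG⟩ := hGdata.2.1 0 y hy
      set CG' : ℝ := max CG 1 with hCG'_def
      have hCG'pos : (0 : ℝ) < CG' := lt_of_lt_of_le one_pos (le_max_right _ _)
      have hCG' : ∀ z, ‖DG 0 y z‖ ≤ CG' * ‖z‖ := fun z =>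
        (hCG z).trans (mul_le_mul_of_nonneg_right (le_max_left _ _) (norm_nonneg _))
      obtain ⟨hRlin, CR, hCR⟩ := hRdata.2.1 0 x hx
      set DRx : A 0 →L[ℝ] B 0 :=
        (IsLinearMap.mk' _ hRlin).mkContinuousOfExistsBound ⟨CR, hCR⟩ with hDRx_def
      have hDRx_apply : ∀ z, DRx z = DR 0 x z := fun z => rfl
      obtain ⟨K₀, hK₀c, hK₀⟩ := hAK 0
      have hKc : IsCompact (DRx '' K₀) := hK₀c.image DRx.continuous
      have hTcont : ContinuousOn (fun p : B 1 × B 0 => DG 0 p.1 p.2)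
          {p : B 1 × B 0 | ιB 0 p.1 ∈ V} := hGdata.2.2.1 0
      obtain ⟨δ₁, hδ₁pos, hkey⟩ := key_estimate hV (hBc 0) hTcont hy hKc
        (show (0 : ℝ) < ε / 3 by positivity)
      have hεR : (0 : ℝ) < min δ₁ (ε / (3 * CG')) := by positivity
      obtain ⟨δ₂, hδ₂pos, hRq⟩ := hRdata.2.2.2.2 x hx _ hεR
      have hyV1 : IsOpen {z : B 1 | ιB 0 z ∈ V} := hV.preimage (hBc 0)
      obtain ⟨ρ, hρpos, hρ⟩ := Metric.isOpen_iff.1 hyV1 y hy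
      set η : ℝ := min (ρ / 2) δ₁ with hη_def
      have hηpos : (0 : ℝ) < η := by positivity
      have hηV : ∀ z : B 1, ‖z - y‖ ≤ η → ιB 0 z ∈ V := by
        intro z hz
        apply hρ
        rw [Metric.mem_ball, dist_eq_norm]
        calc ‖z - y‖ ≤ η := hz
          _ ≤ ρ / 2 := min_le_left _ _
          _ < ρ := by linarith
      have hηδ₁ : η ≤ δ₁ := min_le_right _ _
      have hR1cont := (hRdata.1.1 1) x hx
      rw [Metric.continuousWithinAt_iff] at hR1cont
      obtain ⟨δ₃, hδ₃pos, hδ₃⟩ := hR1cont η hηpos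
      refine ⟨min δ₂ (δ₃ / 2), by positivity, ?_⟩
      intro h hh hxh
      rcases eq_or_ne h 0 with rfl | hh0
      · show ‖G 0 (R 0 (ιA 0 (x + 0))) - G 0 (R 0 (ιA 0 x))
            - DG 0 y (DR 0 x (ιA 0 (0 : A 1)))‖ ≤ ε * ‖(0 : A 1)‖
        rw [add_zero, map_zero, hRlin.map_zero, hGlin.map_zero]
        simp
      have hhpos : (0 : ℝ) < ‖h‖ := norm_pos_iff.2 hh0
      set k₁ : B 1 := R 1 (x + h) - y with hk₁_def
      have hxh' : (x + h) ∈ scDown0 A ιA 1 ⁻¹' U := hxh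
      have hdistxh : dist (x + h) x < δ₃ := by
        rw [dist_eq_norm, add_sub_cancel_left]
        calc ‖h‖ ≤ min δ₂ (δ₃ / 2) := hh
          _ ≤ δ₃ / 2 := min_le_right _ _
          _ < δ₃ := by linarith
      have hk₁small : ‖k₁‖ ≤ η := by
        have hd := hδ₃ hxh' hdistxh
        rw [dist_eq_norm] at hd
        exact hd.le
      have hseg : ∀ t : ℝ, t ∈ Set.Icc (0 : ℝ) 1 → ιB 0 (y + t • k₁) ∈ V := by
        intro t ht
        apply hηV
        rw [add_sub_cancel_left, norm_smul, Real.norm_eq_abs, abs_of_nonneg ht.1]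
        calc t * ‖k₁‖ ≤ 1 * ‖k₁‖ := mul_le_mul_of_nonneg_right ht.2 (norm_nonneg _)
          _ = ‖k₁‖ := one_mul _
          _ ≤ η := hk₁small
      have hcomm : ∀ z : A 1, scDown0 A ιA 1 z ∈ U → R 0 (ιA 0 z) = ιB 0 (R 1 z) :=
        fun z hz => hRdata.1.2 0 z hz
      have hRq' : ‖R 0 (ιA 0 (x + h)) - R 0 (ιA 0 x) - DR 0 x (ιA 0 h)‖
          ≤ min δ₁ (ε / (3 * CG')) * ‖h‖ :=
        hRq h (le_trans hh (min_le_left _ _)) hxh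
      have hιk₁ : ιB 0 k₁ = R 0 (ιA 0 (x + h)) - R 0 (ιA 0 x) := by
        rw [hk₁_def, map_sub, ← hcomm (x + h) hxh, ← hcomm x hx]
      set e₀ : B 0 := ‖h‖⁻¹ • DRx (ιA 0 h) with he₀_def
      have he₀K : e₀ ∈ DRx '' K₀ := by
        refine ⟨ιA 0 (‖h‖⁻¹ • h), hK₀ ⟨‖h‖⁻¹ • h, ?_, rfl⟩, ?_⟩
        · rw [Metric.mem_closedBall, dist_zero_right, norm_smul, norm_inv,
            Real.norm_eq_abs, abs_of_pos hhpos, inv_mul_cancel₀ (ne_of_gt hhpos)]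
        · rw [map_smul, map_smul]
      set d : B 0 := ‖h‖⁻¹ • ιB 0 k₁ with hd_def
      have hde₀ : ‖d - e₀‖ ≤ δ₁ := by
        rw [hd_def, he₀_def, ← smul_sub, norm_smul, norm_inv, Real.norm_eq_abs,
          abs_of_pos hhpos, hιk₁, hDRx_apply]
        calc ‖h‖⁻¹ * ‖R 0 (ιA 0 (x + h)) - R 0 (ιA 0 x) - DR 0 x (ιA 0 h)‖
            ≤ ‖h‖⁻¹ * (min δ₁ (ε / (3 * CG')) * ‖h‖) :=
              mul_le_mul_of_nonneg_left hRq' (by positivity)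
          _ = min δ₁ (ε / (3 * CG')) := by field_simp
          _ ≤ δ₁ := min_le_left _ _
      have hLz : ∀ z : B 1, ιB 0 z ∈ V → ∃ L : B 1 →L[ℝ] C 0,
          (∀ w, L w = DG 0 z (ιB 0 w)) ∧
          HasFDerivAt (fun w : B 1 => G 0 (ιB 0 w)) L z := by
        intro z hz
        obtain ⟨hlin, hbd⟩ := hGdata.2.1 0 z hz
        refine ⟨((IsLinearMap.mk' _ hlin).mkContinuousOfExistsBound hbd).comp
          (⟨ιB 0, hBc 0⟩ : B 1 →L[ℝ] B 0), fun w => rfl, ?_⟩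
        exact hasFDerivAt_of_scQuot hV (hBc 0) hz _ (fun w => rfl)
          (fun ε' hε' => hGdata.2.2.2.2 z hz ε' hε')
      set v : C 0 := DG 0 y (ιB 0 k₁) with hv_def
      have hφderiv : ∀ t ∈ Set.Icc (0 : ℝ) 1,
          HasDerivWithinAt (fun t : ℝ => G 0 (ιB 0 (y + t • k₁)) - t • v)
            (DG 0 (y + t • k₁) (ιB 0 k₁) - v) (Set.Icc 0 1) t := by
        intro t ht
        obtain ⟨L, hLap, hLd⟩ := hLz (y + t • k₁) (hseg t ht)
        have hcurve : HasDerivAt (fun s : ℝ => y + s • k₁) k₁ t := by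
          simpa using ((hasDerivAt_id t).smul_const k₁).const_add y
        have h1 : HasDerivAt (fun s : ℝ => G 0 (ιB 0 (y + s • k₁))) (L k₁) t :=
          by have := hLd.comp_hasDerivAt t hcurve; exact this
        have h2 : HasDerivAt (fun s : ℝ => s • v) v t := by
          simpa using (hasDerivAt_id t).smul_const v
        have h3 := h1.sub h2
        rw [hLap] at h3
        exact h3.hasDerivWithinAt
      have hbound : ∀ t ∈ Set.Ico (0 : ℝ) 1,
          ‖DG 0 (y + t • k₁) (ιB 0 k₁) - v‖ ≤ ε / 3 * ‖h‖ := by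
        intro t ht
        have htIcc : t ∈ Set.Icc (0 : ℝ) 1 := ⟨ht.1, ht.2.le⟩
        have hzt : ιB 0 (y + t • k₁) ∈ V := hseg t htIcc
        obtain ⟨hlin_t, _⟩ := hGdata.2.1 0 (y + t • k₁) hzt
        have hrw1 : DG 0 (y + t • k₁) (ιB 0 k₁) = ‖h‖ • DG 0 (y + t • k₁) d := by
          rw [hd_def, hlin_t.map_smul, smul_smul, mul_inv_cancel₀ (ne_of_gt hhpos), one_smul]
        have hrw2 : v = ‖h‖ • DG 0 y d := by
          rw [hv_def, hd_def, hGlin.map_smul, smul_smul,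
            mul_inv_cancel₀ (ne_of_gt hhpos), one_smul]
        rw [hrw1, hrw2, ← smul_sub, norm_smul, Real.norm_eq_abs, abs_of_pos hhpos, mul_comm]
        apply mul_le_mul_of_nonneg_right _ (norm_nonneg h)
        apply hkey (y + t • k₁) d e₀ he₀K _ hde₀
        rw [add_sub_cancel_left, norm_smul, Real.norm_eq_abs, abs_of_nonneg ht.1]
        calc t * ‖k₁‖ ≤ 1 * ‖k₁‖ := mul_le_mul_of_nonneg_right ht.2.le (norm_nonneg _)
          _ = ‖k₁‖ := one_mul _
          _ ≤ δ₁ := le_trans hk₁small hηδ₁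
      have hMVT := norm_image_sub_le_of_norm_deriv_le_segment' hφderiv hbound 1
        (Set.right_mem_Icc.2 zero_le_one)
      have hA : ‖G 0 (ιB 0 (y + k₁)) - G 0 (ιB 0 y) - v‖ ≤ ε / 3 * ‖h‖ := by
        have h10 : G 0 (ιB 0 (y + k₁)) - G 0 (ιB 0 y) - v =
            (fun t : ℝ => G 0 (ιB 0 (y + t • k₁)) - t • v) 1 -
            (fun t : ℝ => G 0 (ιB 0 (y + t • k₁)) - t • v) 0 := by
          simp only [one_smul, zero_smul, add_zero, sub_zero]
          abel
        rw [h10]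
        calc ‖(fun t : ℝ => G 0 (ιB 0 (y + t • k₁)) - t • v) 1 -
            (fun t : ℝ => G 0 (ιB 0 (y + t • k₁)) - t • v) 0‖
            ≤ ε / 3 * ‖h‖ * (1 - 0) := hMVT
          _ = ε / 3 * ‖h‖ := by ring
      have hB : ‖DG 0 y (ιB 0 k₁ - DR 0 x (ιA 0 h))‖ ≤ ε / 3 * ‖h‖ := by
        calc ‖DG 0 y (ιB 0 k₁ - DR 0 x (ιA 0 h))‖
            ≤ CG' * ‖ιB 0 k₁ - DR 0 x (ιA 0 h)‖ := hCG' _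
          _ ≤ CG' * (min δ₁ (ε / (3 * CG')) * ‖h‖) := by
              apply mul_le_mul_of_nonneg_left _ hCG'pos.le
              rw [hιk₁]; exact hRq'
          _ ≤ CG' * (ε / (3 * CG') * ‖h‖) := by
              apply mul_le_mul_of_nonneg_left _ hCG'pos.le
              exact mul_le_mul_of_nonneg_right (min_le_right _ _) (norm_nonneg _)
          _ = ε / 3 * ‖h‖ := by field_simp
      have ey : ιB 0 y = R 0 (ιA 0 x) := (hcomm x hx).symm
      have e1 : ιB 0 (y + k₁) = R 0 (ιA 0 (x + h)) := by
        rw [map_add, ey, hιk₁]; abel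
      have hfinal : G 0 (R 0 (ιA 0 (x + h))) - G 0 (R 0 (ιA 0 x))
            - DG 0 y (DR 0 x (ιA 0 h))
          = (G 0 (ιB 0 (y + k₁)) - G 0 (ιB 0 y) - v)
            + DG 0 y (ιB 0 k₁ - DR 0 x (ιA 0 h)) := by
        rw [← e1, ← ey, hGlin.map_sub, hv_def]
        abel
      show ‖G 0 (R 0 (ιA 0 (x + h))) - G 0 (R 0 (ιA 0 x))
          - DG 0 y (DR 0 x (ιA 0 h))‖ ≤ ε * ‖h‖
      rw [hfinal]
      calc ‖(G 0 (ιB 0 (y + k₁)) - G 0 (ιB 0 y) - v)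
            + DG 0 y (ιB 0 k₁ - DR 0 x (ιA 0 h))‖
          ≤ ‖G 0 (ιB 0 (y + k₁)) - G 0 (ιB 0 y) - v‖
            + ‖DG 0 y (ιB 0 k₁ - DR 0 x (ιA 0 h))‖ := norm_add_le _ _
        _ ≤ ε / 3 * ‖h‖ + ε / 3 * ‖h‖ := add_le_add hA hB
        _ = (ε / 3 + ε / 3) * ‖h‖ := by ring
        _ ≤ ε * ‖h‖ := mul_le_mul_of_nonneg_right (by linarith) (norm_nonneg _)
    · -- the tangent map of the composition is the composition of the tangent maps
      exact ih (fun k => A (k + 1) × A k) (fun k => B (k + 1) × B k)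
        (fun k => C (k + 1) × C k)
        (fun k => (ιA (k + 1)).prodMap (ιA k)) (fun k => (ιB (k + 1)).prodMap (ιB k))
        (fun k => (ιC (k + 1)).prodMap (ιC k))
        (fun k => ((hAc (k + 1)).comp continuous_fst).prodMk ((hAc k).comp continuous_snd))
        (fun k => by
          obtain ⟨K₁, hK₁, hK₁s⟩ := hAK (k + 1)
          obtain ⟨K₂, hK₂, hK₂s⟩ := hAK k
          refine ⟨K₁ ×ˢ K₂, hK₁.prod hK₂, ?_⟩
          rintro _ ⟨p, hp, rfl⟩
          rw [Metric.mem_closedBall, Prod.dist_eq] at hp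
          exact ⟨hK₁s ⟨p.1, Metric.mem_closedBall.2 (le_trans (le_max_left _ _) hp), rfl⟩,
            hK₂s ⟨p.2, Metric.mem_closedBall.2 (le_trans (le_max_right _ _) hp), rfl⟩⟩)
        (fun k => ((hBc (k + 1)).comp continuous_fst).prodMk ((hBc k).comp continuous_snd))
        {p : A 1 × A 0 | scDown0 A ιA 1 p.1 ∈ U}
        {q : B 1 × B 0 | scDown0 B ιB 1 q.1 ∈ V}
        (hV.preimage ((hBc 0).comp continuous_fst))
        (fun k p => (R (k + 1) p.1, DR k p.1 p.2))
        (fun k q => (G (k + 1) q.1, DG k q.1 q.2))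
        (fun p hp => hdown 1 p.1 hp) hRT hGT

lemma scBanach_cpt {X : ℕ → Type u} [∀ k, NormedAddCommGroup (X k)]
    [∀ k, NormedSpace ℝ (X k)] {ιX : ∀ k, X (k + 1) →ₗ[ℝ] X k}
    (hsc : IsScBanach X ιX) :
    ∀ k, ∃ K : Set (X k), IsCompact K ∧ ιX k '' Metric.closedBall 0 1 ⊆ K := by
  intro k
  obtain ⟨O, hO, hOc⟩ := hsc.2.2.2.1 k 1 one_pos 0
  obtain ⟨ρ, hρpos, hρ⟩ := Metric.mem_nhds_iff.1 hO
  refine ⟨(fun z : X k => (2 / ρ) • z) '' closure (scInclDown X ιX k 1 '' O),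
    hOc.image (continuous_const_smul _), ?_⟩
  rintro _ ⟨z, hz, rfl⟩
  have hz1 : ‖z‖ ≤ 1 := by simpa [dist_zero_right] using hz
  refine ⟨scInclDown X ιX k 1 ((ρ / 2) • z),
    subset_closure ⟨(ρ / 2) • z, hρ ?_, rfl⟩, ?_⟩
  · rw [Metric.mem_ball, dist_zero_right, norm_smul, Real.norm_eq_abs,
      abs_of_pos (by positivity : (0:ℝ) < ρ / 2)]
    nlinarith
  · show (2 / ρ) • (scInclDown X ιX k 1 ((ρ / 2) • z)) = ιX k z
    rw [map_smul, smul_smul]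
    have hc : (2 / ρ) * (ρ / 2) = 1 := by field_simp
    rw [hc, one_smul]
    rfl

/-- **Statement 15** (Lemma 4.15 of the paper): for two sc-smooth retractions `r`, `r'`
with the same image `O` and any map `f` defined on `O` (with values in the sc-Banach
space `𝔽`), the composition `f ∘ r : U → 𝔽` is sc^k if and only if `f ∘ r' : U' → 𝔽`
is sc^k; hence the notion "`f : O → 𝔽` is sc^k" is independent of the choice of
retraction.  (The case `k = ∞` is the conjunction over all `k ∈ ℕ`.) -/
theorem stmt15 (X : ℕ → Type u) (Y : ℕ → Type v)
    [∀ k, NormedAddCommGroup (X k)] [∀ k, NormedSpace ℝ (X k)]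
    [∀ k, NormedAddCommGroup (Y k)] [∀ k, NormedSpace ℝ (Y k)]
    (ιX : ∀ k, X (k + 1) →ₗ[ℝ] X k) (ιY : ∀ k, Y (k + 1) →ₗ[ℝ] Y k)
    (hscX : IsScBanach X ιX) (hscY : IsScBanach Y ιY)
    (U U' : Set (X 0)) (r r' : ∀ k, X k → X k)
    (hr : IsScRetractionOn X ιX U r) (hr' : IsScRetractionOn X ιX U' r')
    (him : r 0 '' U = r' 0 '' U')
    (f : X 0 → Y 0) :
    ∀ m : ℕ,
      IsScNOnAs m X Y ιX ιY U (fun x => f (r 0 x)) ↔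
      IsScNOnAs m X Y ιX ιY U' (fun x => f (r' 0 x)) := by
  intro m
  have hrU : Set.MapsTo (r 0) U U := hr.2.1
  have hr'U' : Set.MapsTo (r' 0) U' U' := hr'.2.1
  have h1 : r' 0 '' U' ⊆ U := by
    rw [← him]; exact Set.image_subset_iff.2 (fun x hx => hrU hx)
  have h2 : r 0 '' U ⊆ U' := by
    rw [him]; exact Set.image_subset_iff.2 (fun x hx => hr'U' hx)
  constructor
  · rintro ⟨G, hG0, hGm⟩
    refine ⟨fun k => G k ∘ r' k, ?_, ?_⟩
    · intro z hz
      have hmem : r' 0 z ∈ r 0 '' U := by rw [him]; exact Set.mem_image_of_mem _ hz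
      obtain ⟨u, hu, huz⟩ := hmem
      have hzU : r' 0 z ∈ U := h1 (Set.mem_image_of_mem _ hz)
      show G 0 (r' 0 z) = f (r' 0 z)
      rw [hG0 _ hzU, ← huz]
      show f (r 0 (r 0 u)) = f (r 0 u)
      rw [hr.2.2.1 u hu]
    · exact isScNOn_comp m X X Y ιX ιX ιY hscX.2.1 (scBanach_cpt hscX) hscX.2.1
        U' U hr.1 r' G (fun z hz => h1 (Set.mem_image_of_mem _ hz)) (hr'.2.2.2 m) hGm
  · rintro ⟨G, hG0, hGm⟩
    refine ⟨fun k => G k ∘ r k, ?_, ?_⟩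
    · intro z hz
      have hmem : r 0 z ∈ r' 0 '' U' := by rw [← him]; exact Set.mem_image_of_mem _ hz
      obtain ⟨u, hu, huz⟩ := hmem
      have hzU' : r 0 z ∈ U' := h2 (Set.mem_image_of_mem _ hz)
      show G 0 (r 0 z) = f (r 0 z)
      rw [hG0 _ hzU', ← huz]
      show f (r' 0 (r' 0 u)) = f (r' 0 u)
      rw [hr'.2.2.1 u hu]
    · exact isScNOn_comp m X X Y ιX ιX ιY hscX.2.1 (scBanach_cpt hscX) hscX.2.1
        U U' hr'.1 r G (fun z hz => h2 (Set.mem_image_of_mem _ hz)) (hr.2.2.2 m) hGm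
end

section
/- Let β : ℝ → ℝ be a fixed smooth, compactly supported function with ‖β‖_{L²(ℝ)} = 1, and for t > 0 set β_t := β(e^{1/t} + ·) ∈ L²(ℝ). Then the map π : ℝ × L²(ℝ) → L²(ℝ) defined by π(t,f) := ⟨f, β_t⟩_{L²} · β_t for t > 0 and π(t,f) := 0 for t ≤ 0 is jointly continuous (including at all points (0,f)). Moreover, for every t ∈ ℝ the map f ↦ π(t,f) is a continuous linear projection (π(t, π(t,f)) = π(t,f) for all f) of operator norm at most 1. -/
/-!
Statement 16 (the continuity part of the "finite-dimensional retract" Example 4.7 of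
the paper): the family of rank-≤1 projections `π(t,f) = ⟨f, β_t⟩ β_t` (for `t > 0`,
with `β_t = β(e^{1/t} + ·)`) and `π(t,f) = 0` (for `t ≤ 0`) is jointly continuous, and
each `π(t,·)` is a linear projection of norm at most 1.
-/

open MeasureTheory Real

/-- The translate `s ↦ β (c + s)` of `β` as an element of `L²(ℝ)` (defined to be `0`
in the irrelevant case where the translate is not square integrable). -/
noncomputable def translateL2 (β : ℝ → ℝ) (c : ℝ) : Lp ℝ 2 (volume : Measure ℝ) :=
  letI := Classical.dec (MeasureTheory.MemLp (fun s => β (c + s)) 2 (volume : Measure ℝ))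
  if h : MeasureTheory.MemLp (fun s => β (c + s)) 2 (volume : Measure ℝ) then h.toLp _ else 0

/-- `β_t := β(e^{1/t} + ·) ∈ L²(ℝ)` for `t > 0`. -/
noncomputable def betaT (β : ℝ → ℝ) (t : ℝ) : Lp ℝ 2 (volume : Measure ℝ) :=
  translateL2 β (Real.exp (1 / t))

/-- The splicing projections `π(t, f)`. -/
noncomputable def spliceProj (β : ℝ → ℝ) (t : ℝ) (f : Lp ℝ 2 (volume : Measure ℝ)) :
    Lp ℝ 2 (volume : Measure ℝ) :=
  if 0 < t then (inner ℝ f (betaT β t) : ℝ) • betaT β t else 0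

section Aux

open Filter Set Topology

variable {β : ℝ → ℝ}

lemma memLp_translate (hc : Continuous β) (hs : HasCompactSupport β) (c : ℝ) :
    MeasureTheory.MemLp (fun s => β (c + s)) 2 (volume : Measure ℝ) := by
  have h1 : Continuous fun s : ℝ => β (c + s) :=
    hc.comp (continuous_const.add continuous_id)
  have h2 : HasCompactSupport fun s : ℝ => β (c + s) :=
    hs.comp_homeomorph (Homeomorph.addLeft c)
  exact h1.memLp_of_hasCompactSupport h2

lemma translateL2_eq (hc : Continuous β) (hs : HasCompactSupport β) (c : ℝ) :
    translateL2 β c = (memLp_translate hc hs c).toLp _ := by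
  rw [translateL2]
  exact dif_pos _

lemma coeFn_translateL2 (hc : Continuous β) (hs : HasCompactSupport β) (c : ℝ) :
    (translateL2 β c : ℝ → ℝ) =ᵐ[volume] fun s => β (c + s) := by
  rw [translateL2_eq hc hs]
  exact (memLp_translate hc hs c).coeFn_toLp

lemma inner_translateL2 (hc : Continuous β) (hs : HasCompactSupport β) (c : ℝ)
    (f : Lp ℝ 2 (volume : Measure ℝ)) :
    (inner ℝ f (translateL2 β c) : ℝ) = ∫ s, (f : ℝ → ℝ) s * β (c + s) := by
  rw [L2.inner_def]
  refine integral_congr_ae ?_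
  filter_upwards [coeFn_translateL2 hc hs c] with s hsβ
  rw [hsβ]
  simp [RCLike.inner_apply, mul_comm]

lemma norm_translateL2 (hc : Continuous β) (hs : HasCompactSupport β)
    (hβnorm : ∫ s, β s ^ 2 = 1) (c : ℝ) : ‖translateL2 β c‖ = 1 := by
  have h1 : (inner ℝ (translateL2 β c) (translateL2 β c) : ℝ) = 1 := by
    rw [L2.inner_def]
    have : ∫ s, (inner ℝ ((translateL2 β c : ℝ → ℝ) s) ((translateL2 β c : ℝ → ℝ) s) : ℝ)
        = ∫ s, β (c + s) ^ 2 := by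
      refine integral_congr_ae ?_
      filter_upwards [coeFn_translateL2 hc hs c] with s hsβ
      rw [hsβ]
      simp [RCLike.inner_apply, sq]
    rw [this]
    rw [MeasureTheory.integral_add_left_eq_self (fun s => β s ^ 2) c]
    exact hβnorm
  have h2 := real_inner_self_eq_norm_mul_norm (translateL2 β c)
  rw [h1] at h2
  nlinarith [norm_nonneg (translateL2 β c)]

lemma continuous_translateL2 (hc : Continuous β) (hs : HasCompactSupport β) :
    Continuous fun c => translateL2 β c := by
  have hβmem : MeasureTheory.MemLp β 2 (volume : Measure ℝ) :=
    hc.memLp_of_hasCompactSupport hs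
  set β₀ : Lp ℝ 2 (volume : Measure ℝ) := hβmem.toLp β with hβ₀
  let F : C(ℝ × ℝ, ℝ) := ⟨fun p => p.1 + p.2, continuous_add⟩
  let g : ℝ → C(ℝ, ℝ) := fun c => F.curry c
  have hgm : ∀ c, MeasurePreserving (g c) (volume : Measure ℝ) (volume : Measure ℝ) := by
    intro c
    exact measurePreserving_add_left volume c
  have hcont : Continuous fun c => Lp.compMeasurePreserving (g c) (hgm c) β₀ :=
    Continuous.compMeasurePreservingLp continuous_const F.curry.continuous hgm (by norm_num)
  have heq : ∀ c, translateL2 β c = Lp.compMeasurePreserving (g c) (hgm c) β₀ := by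
    intro c
    refine Lp.ext ?_
    have h1 := Lp.coeFn_compMeasurePreserving β₀ (hgm c)
    have h2 := coeFn_translateL2 hc hs c
    have h3 : (β₀ : ℝ → ℝ) ∘ (g c) =ᵐ[volume] β ∘ (g c) :=
      (hgm c).quasiMeasurePreserving.ae_eq hβmem.coeFn_toLp
    refine h2.trans (EventuallyEq.trans ?_ h1.symm)
    refine h3.symm.trans (EventuallyEq.of_eq ?_)
    rfl
  simpa only [funext heq] using hcont

lemma inner_translateL2_le (hc : Continuous β) (hs : HasCompactSupport β)
    (hβnorm : ∫ s, β s ^ 2 = 1) {r : ℝ} (hr : tsupport β ⊆ Metric.closedBall 0 r)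
    (c : ℝ) (f : Lp ℝ 2 (volume : Measure ℝ)) :
    |(inner ℝ f (translateL2 β c) : ℝ)| ≤
      Real.sqrt (∫ s in Set.Iic (r - c), (f : ℝ → ℝ) s ^ 2) := by
  set a := r - c with ha
  have hτ0 : ∀ s : ℝ, s ∉ Set.Iic a → β (c + s) = 0 := by
    intro s hsa
    apply image_eq_zero_of_notMem_tsupport
    intro hmem
    have := hr hmem
    rw [Metric.mem_closedBall, Real.dist_eq, sub_zero] at this
    have h1 : a < s := not_le.mp hsa
    have : c + s ≤ r := le_trans (le_abs_self _) this
    linarith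
  -- rewrite inner as an integral over `Iic a`
  have hinner : (inner ℝ f (translateL2 β c) : ℝ)
      = ∫ s in Set.Iic a, (f : ℝ → ℝ) s * β (c + s) := by
    rw [inner_translateL2 hc hs c f]
    exact (setIntegral_eq_integral_of_forall_compl_eq_zero
      (fun s hsa => by rw [hτ0 s hsa, mul_zero])).symm
  -- Cauchy–Schwarz on the restricted measure
  set μ' : Measure ℝ := volume.restrict (Set.Iic a) with hμ'
  have hF : MeasureTheory.MemLp (f : ℝ → ℝ) 2 μ' := (Lp.memLp f).restrict _
  have hT : MeasureTheory.MemLp (fun s => β (c + s)) 2 μ' :=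
    (memLp_translate hc hs c).restrict _
  set F : Lp ℝ 2 μ' := hF.toLp _ with hFdef
  set T : Lp ℝ 2 μ' := hT.toLp _ with hTdef
  have hinnerFT : (inner ℝ F T : ℝ) = ∫ s in Set.Iic a, (f : ℝ → ℝ) s * β (c + s) := by
    rw [L2.inner_def]
    refine integral_congr_ae ?_
    filter_upwards [hF.coeFn_toLp, hT.coeFn_toLp] with s h1 h2
    rw [h1, h2]
    simp [RCLike.inner_apply, mul_comm]
  have hnormF : ‖F‖ ^ 2 = ∫ s in Set.Iic a, (f : ℝ → ℝ) s ^ 2 := by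
    rw [← real_inner_self_eq_norm_sq, L2.inner_def]
    refine integral_congr_ae ?_
    filter_upwards [hF.coeFn_toLp] with s h1
    rw [h1]
    simp [RCLike.inner_apply, sq]
  have hnormT : ‖T‖ ≤ 1 := by
    have hTsq : ‖T‖ ^ 2 = ∫ s in Set.Iic a, β (c + s) ^ 2 := by
      rw [← real_inner_self_eq_norm_sq, L2.inner_def]
      refine integral_congr_ae ?_
      filter_upwards [hT.coeFn_toLp] with s h1
      rw [h1]
      simp [RCLike.inner_apply, sq]
    have hint : Integrable (fun s => β (c + s) ^ 2) (volume : Measure ℝ) :=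
      (memLp_translate hc hs c).integrable_sq
    have hle : ∫ s in Set.Iic a, β (c + s) ^ 2 ≤ ∫ s, β (c + s) ^ 2 :=
      setIntegral_le_integral hint (Eventually.of_forall fun s => sq_nonneg _)
    have htot : ∫ s, β (c + s) ^ 2 = 1 := by
      rw [MeasureTheory.integral_add_left_eq_self (fun s => β s ^ 2) c]
      exact hβnorm
    nlinarith [norm_nonneg T]
  calc |(inner ℝ f (translateL2 β c) : ℝ)| = |(inner ℝ F T : ℝ)| := by
        rw [hinner, hinnerFT]
    _ ≤ ‖F‖ * ‖T‖ := abs_real_inner_le_norm F T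
    _ ≤ ‖F‖ * 1 := by
        have := norm_nonneg F
        nlinarith
    _ = Real.sqrt (∫ s in Set.Iic a, (f : ℝ → ℝ) s ^ 2) := by
        rw [mul_one, ← hnormF, Real.sqrt_sq (norm_nonneg F)]

lemma tendsto_setIntegral_Iic_atBot' {g : ℝ → ℝ}
    (hg : Integrable g (volume : Measure ℝ)) :
    Tendsto (fun a => ∫ s in Set.Iic a, g s) atBot (𝓝 0) := by
  have heq : ∀ a : ℝ, ∫ s in Set.Iic a, g s
      = ∫ s, Set.indicator (Set.Iic a) g s := fun a =>
    (integral_indicator measurableSet_Iic).symm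
  simp only [heq]
  have h0 : (0 : ℝ) = ∫ s : ℝ, (0 : ℝ) := by simp
  rw [h0]
  refine tendsto_integral_filter_of_dominated_convergence (fun s => |g s|)
    (Eventually.of_forall fun a => hg.aestronglyMeasurable.indicator measurableSet_Iic)
    (Eventually.of_forall fun a => Eventually.of_forall fun s => ?_)
    hg.abs
    (Eventually.of_forall fun s => ?_)
  · calc ‖Set.indicator (Set.Iic a) g s‖ ≤ ‖g s‖ := norm_indicator_le_norm_self g s
      _ = |g s| := Real.norm_eq_abs _
  · refine Tendsto.congr' ?_ tendsto_const_nhds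
    filter_upwards [eventually_lt_atBot s] with a haS
    rw [Set.indicator_of_notMem]
    simpa using haS.not_ge

end Aux

open Filter Set Topology

/-- **Statement 16**: if `β` is smooth with compact support and `‖β‖_{L²} = 1`, then
`π : ℝ × L²(ℝ) → L²(ℝ)` is jointly continuous (including at `t = 0`), and for every
`t` the map `f ↦ π(t,f)` is a continuous linear projection of operator norm at most 1. -/
theorem stmt16 (β : ℝ → ℝ) (hβsmooth : ContDiff ℝ (⊤ : ℕ∞) β)
    (hβsupp : HasCompactSupport β)
    (hβnorm : ∫ s, β s ^ 2 = 1) :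
    Continuous (fun p : ℝ × Lp ℝ 2 (volume : Measure ℝ) => spliceProj β p.1 p.2) ∧
    (∀ t : ℝ, IsLinearMap ℝ (spliceProj β t)) ∧
    (∀ (t : ℝ) (f : Lp ℝ 2 (volume : Measure ℝ)),
      spliceProj β t (spliceProj β t f) = spliceProj β t f) ∧
    (∀ (t : ℝ) (f : Lp ℝ 2 (volume : Measure ℝ)), ‖spliceProj β t f‖ ≤ ‖f‖) := by
  have hc : Continuous β := hβsmooth.continuous
  have hs : HasCompactSupport β := hβsupp
  have hnorm1 : ∀ t : ℝ, ‖betaT β t‖ = 1 := fun t =>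
    norm_translateL2 hc hs hβnorm (Real.exp (1 / t))
  refine ⟨?_, ?_, ?_, ?_⟩
  · -- joint continuity
    rw [continuous_iff_continuousAt]
    rintro ⟨t₀, f₀⟩
    rcases lt_trichotomy t₀ 0 with ht₀ | ht₀ | ht₀
    · -- t₀ < 0 : locally zero
      have hz : ∀ᶠ p : ℝ × Lp ℝ 2 (volume : Measure ℝ) in 𝓝 (t₀, f₀),
          (0 : Lp ℝ 2 (volume : Measure ℝ)) = spliceProj β p.1 p.2 := by
        have h1 : ∀ᶠ p : ℝ × Lp ℝ 2 (volume : Measure ℝ) in 𝓝 (t₀, f₀), p.1 < 0 :=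
          (continuous_fst.tendsto (t₀, f₀)).eventually (gt_mem_nhds ht₀)
        filter_upwards [h1] with p hp
        rw [spliceProj, if_neg (not_lt.mpr hp.le)]
      exact continuousAt_const.congr hz
    · -- t₀ = 0 : the hard case
      subst ht₀
      have hval : spliceProj β 0 f₀ = 0 := by rw [spliceProj, if_neg (lt_irrefl 0)]
      rw [ContinuousAt]
      show Filter.Tendsto (fun p : ℝ × Lp ℝ 2 (volume : Measure ℝ) => spliceProj β p.1 p.2)
        (𝓝 (0, f₀)) (𝓝 (spliceProj β 0 f₀))
      rw [hval, NormedAddCommGroup.tendsto_nhds_zero]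
      intro ε hε
      have hε2 : (0 : ℝ) < ε / 2 := by linarith
      obtain ⟨r, hr⟩ := hs.isBounded.subset_closedBall 0
      -- the tail integral tends to zero
      have hG : Filter.Tendsto (fun a => ∫ s in Set.Iic a, (f₀ : ℝ → ℝ) s ^ 2)
          Filter.atBot (𝓝 0) :=
        tendsto_setIntegral_Iic_atBot' ((Lp.memLp f₀).integrable_sq)
      have htend : Filter.Tendsto (fun t : ℝ => r - Real.exp (1 / t))
          (𝓝[>] 0) Filter.atBot := by
        have h1 : Filter.Tendsto (fun t : ℝ => 1 / t) (𝓝[>] 0) Filter.atTop := by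
          simpa [one_div] using tendsto_inv_nhdsGT_zero (𝕜 := ℝ)
        have h2 : Filter.Tendsto (fun t : ℝ => Real.exp (1 / t)) (𝓝[>] 0) Filter.atTop :=
          Real.tendsto_exp_atTop.comp h1
        have h3 : Filter.Tendsto (fun t : ℝ => -Real.exp (1 / t)) (𝓝[>] 0) Filter.atBot :=
          Filter.tendsto_neg_atTop_atBot.comp h2
        simpa [sub_eq_add_neg] using Filter.tendsto_atBot_add_const_left _ r h3
      have h2 : ∀ᶠ t in 𝓝[>] (0 : ℝ),
          ∫ s in Set.Iic (r - Real.exp (1 / t)), (f₀ : ℝ → ℝ) s ^ 2 < (ε / 2) ^ 2 :=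
        (hG.comp htend).eventually (gt_mem_nhds (by positivity))
      obtain ⟨δ, hδ, hδP⟩ := Metric.mem_nhdsWithin_iff.mp h2
      have e1 : ∀ᶠ p : ℝ × Lp ℝ 2 (volume : Measure ℝ) in 𝓝 (0, f₀), p.1 < δ :=
        (continuous_fst.tendsto ((0 : ℝ), f₀)).eventually (gt_mem_nhds hδ)
      have e2 : ∀ᶠ p : ℝ × Lp ℝ 2 (volume : Measure ℝ) in 𝓝 (0, f₀), ‖p.2 - f₀‖ < ε / 2 := by
        have h : Filter.Tendsto (fun p : ℝ × Lp ℝ 2 (volume : Measure ℝ) => ‖p.2 - f₀‖)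
            (𝓝 (0, f₀)) (𝓝 0) := by
          have hcn : Continuous (fun p : ℝ × Lp ℝ 2 (volume : Measure ℝ) => ‖p.2 - f₀‖) :=
            (continuous_snd.sub continuous_const).norm
          have := hcn.tendsto (((0 : ℝ), f₀) : ℝ × Lp ℝ 2 (volume : Measure ℝ))
          simpa only [sub_self, norm_zero] using this
        exact h.eventually (gt_mem_nhds hε2)
      filter_upwards [e1, e2] with p hp1 hp2
      by_cases hp : 0 < p.1
      · have hmem : p.1 ∈ Metric.ball (0 : ℝ) δ ∩ Set.Ioi 0 := by
          constructor
          · rw [Metric.mem_ball, Real.dist_eq, sub_zero, abs_of_pos hp]; exact hp1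
          · exact hp
        have hGlt := hδP hmem
        have hkey := inner_translateL2_le hc hs hβnorm hr (Real.exp (1 / p.1)) f₀
        have hsqrt : Real.sqrt (∫ s in Set.Iic (r - Real.exp (1 / p.1)),
            (f₀ : ℝ → ℝ) s ^ 2) < ε / 2 := (Real.sqrt_lt' hε2).mpr hGlt
        have hβt : betaT β p.1 = translateL2 β (Real.exp (1 / p.1)) := rfl
        have hib : |(inner ℝ f₀ (betaT β p.1) : ℝ)| < ε / 2 := by
          rw [hβt]; exact lt_of_le_of_lt hkey hsqrt
        have hsplit : (inner ℝ p.2 (betaT β p.1) : ℝ)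
            = (inner ℝ f₀ (betaT β p.1) : ℝ) + (inner ℝ (p.2 - f₀) (betaT β p.1) : ℝ) := by
          rw [← inner_add_left]; norm_num
        have hdiff : |(inner ℝ (p.2 - f₀) (betaT β p.1) : ℝ)| ≤ ‖p.2 - f₀‖ := by
          have := abs_real_inner_le_norm (p.2 - f₀) (betaT β p.1)
          rwa [hnorm1 p.1, mul_one] at this
        rw [spliceProj, if_pos hp, norm_smul, hnorm1 p.1, mul_one, Real.norm_eq_abs]
        calc |(inner ℝ p.2 (betaT β p.1) : ℝ)|
            ≤ |(inner ℝ f₀ (betaT β p.1) : ℝ)| + |(inner ℝ (p.2 - f₀) (betaT β p.1) : ℝ)| := by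
              rw [hsplit]; exact abs_add_le _ _
          _ < ε / 2 + ε / 2 := by
              refine add_lt_add_of_lt_of_le hib (le_trans hdiff hp2.le)
          _ = ε := by ring
      · rw [spliceProj, if_neg hp]
        simpa using hε
    · -- t₀ > 0 : the formula is continuous there
      have hβTcont : ContinuousAt (fun t : ℝ => betaT β t) t₀ := by
        have h1 : ContinuousAt (fun t : ℝ => Real.exp (1 / t)) t₀ :=
          Real.continuous_exp.continuousAt.comp
            ((continuousAt_const.div continuousAt_id ht₀.ne'))
        exact ((continuous_translateL2 hc hs).continuousAt).comp h1
      have hformula : ContinuousAt (fun p : ℝ × Lp ℝ 2 (volume : Measure ℝ) =>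
          (inner ℝ p.2 (betaT β p.1) : ℝ) • betaT β p.1) (t₀, f₀) := by
        have hb : ContinuousAt (fun p : ℝ × Lp ℝ 2 (volume : Measure ℝ) => betaT β p.1)
            (t₀, f₀) := hβTcont.comp (f := Prod.fst) (x := (t₀, f₀)) continuousAt_fst
        exact ((continuousAt_snd.inner (𝕜 := ℝ) hb)).smul hb
      refine hformula.congr ?_
      have h1 : ∀ᶠ p : ℝ × Lp ℝ 2 (volume : Measure ℝ) in 𝓝 (t₀, f₀), 0 < p.1 :=
        (continuous_fst.tendsto (t₀, f₀)).eventually (lt_mem_nhds ht₀)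
      filter_upwards [h1] with p hp
      rw [spliceProj, if_pos hp]
  · -- linearity
    intro t
    constructor
    · intro f g
      by_cases h : 0 < t <;>
        simp [spliceProj, h, inner_add_left, add_smul]
    · intro a f
      by_cases h : 0 < t <;>
        simp [spliceProj, h, real_inner_smul_left, smul_smul]
  · -- idempotence
    intro t f
    by_cases h : 0 < t
    · have hbb : (inner ℝ (betaT β t) (betaT β t) : ℝ) = 1 := by
        rw [real_inner_self_eq_norm_mul_norm, hnorm1 t]; norm_num
      simp only [spliceProj, if_pos h, real_inner_smul_left, hbb, mul_one]
    · simp only [spliceProj, if_neg h]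
  · -- norm bound
    intro t f
    by_cases h : 0 < t
    · rw [spliceProj, if_pos h, norm_smul, hnorm1 t, mul_one, Real.norm_eq_abs]
      have := abs_real_inner_le_norm f (betaT β t)
      rwa [hnorm1 t, mul_one] at this
    · rw [spliceProj, if_neg h]
      simp only [norm_zero]
      exact norm_nonneg f
end

section
/- Let E₀ and F₀ be Banach spaces, and let E₁ ⊆ E₀ and F₁ ⊆ F₀ be linear subspaces each equipped with a complete norm making the inclusions E₁ → E₀ and F₁ → F₀ bounded, with F₁ dense in F₀. Let L : E₀ → F₀ be a bounded linear Fredholm operator (finite-dimensional kernel and finite-dimensional cokernel F₀/L(E₀)) such that L(E₁) ⊆ F₁, the restriction L₁ := L|_{E₁} : E₁ → F₁ is bounded, and L is regularizing: whenever x ∈ E₀ and Lx ∈ F₁ then x ∈ E₁. Then L₁ : E₁ → F₁ is a Fredholm operator with ker L₁ = ker L (in particular ker L ⊆ E₁), dim(F₁/L₁(E₁)) = dim(F₀/L(E₀)), and hence ind L₁ = ind L. -/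
/-!
Statement 19 (behind Lemma 5.6 of the paper): a regularizing, scale-bounded linear
operator which is Fredholm on the level `0` restricts to a Fredholm operator on the
next level, with the same kernel and a cokernel of the same dimension, hence with the
same index.
-/

open Function

/-- A bounded operator between Banach spaces with finite-dimensional cokernel
has closed range. -/
theorem auxStmt19_isClosed_range {E F : Type*}
    [NormedAddCommGroup E] [NormedSpace ℝ E] [CompleteSpace E]
    [NormedAddCommGroup F] [NormedSpace ℝ F] [CompleteSpace F]
    (L : E →L[ℝ] F) (hcoker : FiniteDimensional ℝ (F ⧸ LinearMap.range (L : E →ₗ[ℝ] F))) :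
    IsClosed (LinearMap.range (L : E →ₗ[ℝ] F) : Set F) := by
  obtain ⟨σ, hσ⟩ := (LinearMap.range (L : E →ₗ[ℝ] F)).mkQ.exists_rightInverse_of_surjective
    (by rw [Submodule.range_mkQ])
  set M : Submodule ℝ F := LinearMap.range σ with hM
  haveI : FiniteDimensional ℝ M := Module.Finite.range σ
  haveI : CompleteSpace M := FiniteDimensional.complete ℝ M
  have hσ' : ∀ q, (LinearMap.range (L : E →ₗ[ℝ] F)).mkQ (σ q) = q := fun q => by
    have := LinearMap.congr_fun hσ q; simpa using this
  -- disjointness of M and range L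
  have hdisj : ∀ m : F, m ∈ M → m ∈ LinearMap.range (L : E →ₗ[ℝ] F) → m = 0 := by
    rintro m ⟨q, rfl⟩ hm
    have h0 : (LinearMap.range (L : E →ₗ[ℝ] F)).mkQ (σ q) = 0 := by
      rwa [Submodule.mkQ_apply, Submodule.Quotient.mk_eq_zero]
    rw [hσ'] at h0
    rw [h0, map_zero]
  -- the auxiliary operator
  set T : E × M →L[ℝ] F :=
    L.comp (ContinuousLinearMap.fst ℝ E M) + M.subtypeL.comp (ContinuousLinearMap.snd ℝ E M)
    with hT
  have hTapp : ∀ p : E × M, T p = L p.1 + (p.2 : F) := fun p => rfl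
  have hsurj : Surjective T := by
    intro f
    have hmem : f - σ ((LinearMap.range (L : E →ₗ[ℝ] F)).mkQ f) ∈ LinearMap.range (L : E →ₗ[ℝ] F) := by
      have : (LinearMap.range (L : E →ₗ[ℝ] F)).mkQ (f - σ ((LinearMap.range (L : E →ₗ[ℝ] F)).mkQ f)) = 0 := by
        rw [map_sub, hσ', sub_self]
      rwa [Submodule.mkQ_apply, Submodule.Quotient.mk_eq_zero] at this
    obtain ⟨x, hx⟩ := hmem
    exact ⟨(x, ⟨σ ((LinearMap.range (L : E →ₗ[ℝ] F)).mkQ f), ⟨_, rfl⟩⟩), by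
      rw [hTapp]; simp only; rw [ContinuousLinearMap.coe_coe] at hx; rw [hx]; abel⟩
  rw [← isOpen_compl_iff]
  have himg : (LinearMap.range (L : E →ₗ[ℝ] F) : Set F)ᶜ = T '' {p : E × M | p.2 ≠ 0} := by
    ext f
    constructor
    · intro hf
      obtain ⟨p, hp⟩ := hsurj f
      refine ⟨p, ?_, hp⟩
      intro h2
      apply hf
      rw [← hp, hTapp, h2]
      simp only [ZeroMemClass.coe_zero, add_zero]
      exact ⟨p.1, rfl⟩
    · rintro ⟨p, h2, rfl⟩ hmem
      obtain ⟨x, hx⟩ := hmem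
      apply h2
      have : (p.2 : F) ∈ LinearMap.range (L : E →ₗ[ℝ] F) := by
        refine ⟨x - p.1, ?_⟩
        rw [map_sub, hx, hTapp]; simp only [ContinuousLinearMap.coe_coe]; abel
      have := hdisj (p.2 : F) p.2.2 this
      exact Subtype.ext this
  rw [himg]
  exact T.isOpenMap hsurj _ (isOpen_compl_singleton.preimage continuous_snd)

theorem stmt19
    {E0 E1 F0 F1 : Type*}
    [NormedAddCommGroup E0] [NormedSpace ℝ E0] [CompleteSpace E0]
    [NormedAddCommGroup E1] [NormedSpace ℝ E1] [CompleteSpace E1]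
    [NormedAddCommGroup F0] [NormedSpace ℝ F0] [CompleteSpace F0]
    [NormedAddCommGroup F1] [NormedSpace ℝ F1] [CompleteSpace F1]
    -- `E₁ ⊆ E₀` and `F₁ ⊆ F₀` as continuous (bounded) injective linear inclusions:
    (iE : E1 →L[ℝ] E0) (hiE : Function.Injective iE)
    (iF : F1 →L[ℝ] F0) (hiF : Function.Injective iF)
    -- `F₁` is dense in `F₀`:
    (hdense : DenseRange iF)
    -- `L : E₀ → F₀` bounded linear, and its restriction `L₁ : E₁ → F₁` bounded linear:
    (L : E0 →L[ℝ] F0) (L1 : E1 →L[ℝ] F1)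
    (hrestrict : ∀ x : E1, iF (L1 x) = L (iE x))
    -- `L` is Fredholm:
    (hker : FiniteDimensional ℝ (LinearMap.ker (L : E0 →ₗ[ℝ] F0)))
    (hcoker : FiniteDimensional ℝ (F0 ⧸ LinearMap.range (L : E0 →ₗ[ℝ] F0)))
    -- `L` is regularizing: `x ∈ E₀` and `L x ∈ F₁` imply `x ∈ E₁`:
    (hreg : ∀ x : E0, (∃ y : F1, iF y = L x) → ∃ z : E1, iE z = x) :
    -- `L₁` is Fredholm with the same kernel, a cokernel of the same dimension, and
    -- the same index:
    FiniteDimensional ℝ (LinearMap.ker (L1 : E1 →ₗ[ℝ] F1)) ∧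
    Submodule.map (iE : E1 →ₗ[ℝ] E0) (LinearMap.ker (L1 : E1 →ₗ[ℝ] F1)) = LinearMap.ker (L : E0 →ₗ[ℝ] F0) ∧
    FiniteDimensional ℝ (F1 ⧸ LinearMap.range (L1 : E1 →ₗ[ℝ] F1)) ∧
    Module.finrank ℝ (F1 ⧸ LinearMap.range (L1 : E1 →ₗ[ℝ] F1)) = Module.finrank ℝ (F0 ⧸ LinearMap.range (L : E0 →ₗ[ℝ] F0)) ∧
    (Module.finrank ℝ (LinearMap.ker (L1 : E1 →ₗ[ℝ] F1)) : ℤ) - Module.finrank ℝ (F1 ⧸ LinearMap.range (L1 : E1 →ₗ[ℝ] F1))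
      = (Module.finrank ℝ (LinearMap.ker (L : E0 →ₗ[ℝ] F0)) : ℤ) - Module.finrank ℝ (F0 ⧸ LinearMap.range (L : E0 →ₗ[ℝ] F0)) := by
  -- Kernel part
  have hkerEq : Submodule.map (iE : E1 →ₗ[ℝ] E0) (LinearMap.ker (L1 : E1 →ₗ[ℝ] F1)) = LinearMap.ker (L : E0 →ₗ[ℝ] F0) := by
    ext x
    simp only [Submodule.mem_map, LinearMap.mem_ker]
    constructor
    · rintro ⟨z, hz, rfl⟩
      have : iF (L1 z) = L (iE z) := hrestrict z
      rw [ContinuousLinearMap.coe_coe] at hz; rw [hz, map_zero] at this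
      simpa [ContinuousLinearMap.coe_coe] using this.symm
    · intro hx
      obtain ⟨z, rfl⟩ := hreg x ⟨0, by rw [map_zero]; exact hx.symm⟩
      refine ⟨z, ?_, rfl⟩
      apply hiF
      rw [ContinuousLinearMap.coe_coe, hrestrict z, map_zero]
      simpa [ContinuousLinearMap.coe_coe] using hx
  have eker : (LinearMap.ker (L1 : E1 →ₗ[ℝ] F1)) ≃ₗ[ℝ] (LinearMap.ker (L : E0 →ₗ[ℝ] F0)) :=
    (Submodule.equivMapOfInjective (iE : E1 →ₗ[ℝ] E0)
      (fun a b h => hiE h) (LinearMap.ker (L1 : E1 →ₗ[ℝ] F1))).trans (LinearEquiv.ofEq _ _ hkerEq)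
  haveI hfk : FiniteDimensional ℝ (LinearMap.ker (L1 : E1 →ₗ[ℝ] F1)) := Module.Finite.equiv eker.symm
  have hfrk : Module.finrank ℝ (LinearMap.ker (L1 : E1 →ₗ[ℝ] F1)) = Module.finrank ℝ (LinearMap.ker (L : E0 →ₗ[ℝ] F0)) :=
    eker.finrank_eq
  -- Cokernel part
  haveI hclosed : IsClosed ((LinearMap.range (L : E0 →ₗ[ℝ] F0) : Submodule ℝ F0) : Set F0) :=
    auxStmt19_isClosed_range L hcoker
  set Q := F0 ⧸ LinearMap.range (L : E0 →ₗ[ℝ] F0)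
  set ψ : F1 →ₗ[ℝ] Q := (LinearMap.range (L : E0 →ₗ[ℝ] F0)).mkQ ∘ₗ (iF : F1 →ₗ[ℝ] F0) with hψ
  have hmkQcont : Continuous (LinearMap.range (L : E0 →ₗ[ℝ] F0)).mkQ :=
    AddMonoidHomClass.continuous_of_bound (LinearMap.range (L : E0 →ₗ[ℝ] F0)).mkQ 1 fun x => by
      simpa using Submodule.Quotient.norm_mk_le (LinearMap.range (L : E0 →ₗ[ℝ] F0)) x
  have hψcont : Continuous ψ := hmkQcont.comp iF.continuous
  have hkerψ : LinearMap.ker ψ = LinearMap.range (L1 : E1 →ₗ[ℝ] F1) := by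
    ext y
    have hy : ψ y = Submodule.Quotient.mk (iF y) := rfl
    rw [LinearMap.mem_ker, hy, Submodule.Quotient.mk_eq_zero]
    constructor
    · intro hmem
      obtain ⟨x, hx⟩ := hmem
      obtain ⟨z, rfl⟩ := hreg x ⟨y, by simpa using hx.symm⟩
      refine ⟨z, hiF ?_⟩
      rw [ContinuousLinearMap.coe_coe, hrestrict z]
      simpa using hx
    · rintro ⟨z, rfl⟩
      exact ⟨iE z, by simpa using (hrestrict z).symm⟩
  have hsurjψ : Surjective ψ := by
    have hdr : DenseRange ψ := by
      have hmkQsurj : Surjective (LinearMap.range (L : E0 →ₗ[ℝ] F0)).mkQ := Submodule.mkQ_surjective _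
      exact hmkQsurj.denseRange.comp hdense hmkQcont
    have hcl : IsClosed (LinearMap.range ψ : Set Q) :=
      Submodule.closed_of_finiteDimensional (LinearMap.range ψ)
    rw [← LinearMap.range_eq_top]
    rw [Submodule.eq_top_iff']
    intro q
    have : q ∈ closure (Set.range ψ) := hdr q
    rwa [← LinearMap.coe_range, hcl.closure_eq] at this
  have ecoker : (F1 ⧸ LinearMap.range (L1 : E1 →ₗ[ℝ] F1)) ≃ₗ[ℝ] Q :=
    (Submodule.quotEquivOfEq _ _ hkerψ.symm).trans (ψ.quotKerEquivOfSurjective hsurjψ)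
  haveI hfc : FiniteDimensional ℝ (F1 ⧸ LinearMap.range (L1 : E1 →ₗ[ℝ] F1)) := Module.Finite.equiv ecoker.symm
  have hfrc : Module.finrank ℝ (F1 ⧸ LinearMap.range (L1 : E1 →ₗ[ℝ] F1)) = Module.finrank ℝ Q :=
    ecoker.finrank_eq
  exact ⟨hfk, hkerEq, hfc, hfrc, by rw [hfrk, hfrc]⟩
end
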